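/- arXiv:1803.01133 — 7 statements merged into one kernel-verified Lean document; each statement's English description precedes it below -/
import Mathlib

section
/- Let T be a bounded operator on a complex Hilbert space and β_n(T) = ∑_{j=0}^{n} (-1)^{n-j} C(n,j) (T*)^j T^j. Then for all k, n ≥ 0, (T*)^k β_n(T) T^k = ∑_{j=0}^{k} C(k,j) β_{n+j}(T). -/
open ContinuousLinearMap

variable {H : Type*} [NormedAddCommGroup H] [InnerProductSpace ℂ H] [CompleteSpace H]

/-- `beta T n = ∑_{j=0}^n (-1)^{n-j} C(n,j) (T*)^j T^j`. -/
noncomputable def beta (T : H →L[ℂ] H) (n : ℕ) : H →L[ℂ] H :=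
  ∑ j ∈ Finset.range (n + 1),
    ((-1 : ℂ) ^ (n - j) * (n.choose j : ℂ)) • ((ContinuousLinearMap.adjoint T) ^ j * T ^ j)

/-- Auxiliary Pascal-type identity in any ℂ-module. -/
lemma beta_aux2 {M : Type*} [AddCommGroup M] [Module ℂ M] (B : ℕ → M) (k : ℕ) :
    ∑ j ∈ Finset.range (k + 1), (k.choose j : ℂ) • (B j + B (j + 1))
      = ∑ j ∈ Finset.range (k + 2), ((k + 1).choose j : ℂ) • B j := by
  rw [Finset.sum_range_succ' (fun j => (((k + 1).choose j : ℂ)) • B j) (k + 1)]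
  simp only [Nat.choose_succ_succ, Nat.cast_add, add_smul, smul_add,
    Finset.sum_add_distrib, Nat.choose_zero_right, Nat.cast_one, one_smul]
  rw [Finset.sum_range_succ' (fun j => ((k.choose j : ℂ)) • B j) k]
  rw [Finset.sum_range_succ (fun j => ((k.choose (j + 1) : ℂ)) • B (j + 1)) k]
  simp [Nat.choose_succ_self]
  abel

/-- Auxiliary alternating-sum identity in any ℂ-module. -/
lemma beta_aux1 {M : Type*} [AddCommGroup M] [Module ℂ M] (A : ℕ → M) (m : ℕ) :
    ∑ j ∈ Finset.range (m + 1), ((-1 : ℂ) ^ (m - j) * (m.choose j : ℂ)) • A (j + 1)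
      = (∑ j ∈ Finset.range (m + 1), ((-1 : ℂ) ^ (m - j) * (m.choose j : ℂ)) • A j)
        + ∑ j ∈ Finset.range (m + 2), ((-1 : ℂ) ^ (m + 1 - j) * ((m + 1).choose j : ℂ)) • A j := by
  rw [Finset.sum_range_succ' (fun j => ((-1 : ℂ) ^ (m + 1 - j) * ((m + 1).choose j : ℂ)) • A j) (m + 1)]
  simp only [Nat.succ_sub_succ, Nat.choose_succ_succ, Nat.cast_add, mul_add, add_smul,
    Finset.sum_add_distrib, Nat.sub_zero, Nat.choose_zero_right, Nat.cast_one, mul_one]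
  rw [Finset.sum_range_succ (fun j => ((-1 : ℂ) ^ (m - j) * (m.choose (j + 1) : ℂ)) • A (j + 1)) m]
  rw [Finset.sum_range_succ' (fun j => ((-1 : ℂ) ^ (m - j) * (m.choose j : ℂ)) • A j) m]
  have h : ∀ j ∈ Finset.range m, ((-1 : ℂ) ^ (m - j) * (m.choose (j + 1) : ℂ)) • A (j + 1)
      = -(((-1 : ℂ) ^ (m - (j + 1)) * (m.choose (j + 1) : ℂ)) • A (j + 1)) := by
    intro j hj
    rw [Finset.mem_range] at hj
    have hm : m - j = (m - (j + 1)) + 1 := by omega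
    rw [hm, pow_succ]
    simp [neg_smul]
  rw [Finset.sum_congr rfl h, Finset.sum_neg_distrib]
  simp [Nat.choose_succ_self, pow_succ]
  abel

/-- The key recurrence `T* β_m T = β_m + β_{m+1}`. -/
lemma beta_conj (T : H →L[ℂ] H) (m : ℕ) :
    ContinuousLinearMap.adjoint T * beta T m * T = beta T m + beta T (m + 1) := by
  have hL : ContinuousLinearMap.adjoint T * beta T m * T
      = ∑ j ∈ Finset.range (m + 1), ((-1 : ℂ) ^ (m - j) * (m.choose j : ℂ)) •
          ((ContinuousLinearMap.adjoint T) ^ (j + 1) * T ^ (j + 1)) := by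
    unfold beta
    rw [Finset.mul_sum, Finset.sum_mul]
    refine Finset.sum_congr rfl fun j _ => ?_
    rw [mul_smul_comm, smul_mul_assoc]
    congr 1
    rw [pow_succ', pow_succ]
    noncomm_ring
  rw [hL]
  exact beta_aux1 (fun j => (ContinuousLinearMap.adjoint T) ^ j * T ^ j) m

theorem adjoint_pow_beta_pow (T : H →L[ℂ] H) (k n : ℕ) :
    (ContinuousLinearMap.adjoint T) ^ k * beta T n * T ^ k
      = ∑ j ∈ Finset.range (k + 1), (k.choose j : ℂ) • beta T (n + j) := by
  induction k with
  | zero => simp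
  | succ k ih =>
    have hstep : (ContinuousLinearMap.adjoint T) ^ (k + 1) * beta T n * T ^ (k + 1)
        = ContinuousLinearMap.adjoint T * ((ContinuousLinearMap.adjoint T) ^ k * beta T n * T ^ k) * T := by
      rw [pow_succ', pow_succ]
      noncomm_ring
    rw [hstep, ih, Finset.mul_sum, Finset.sum_mul]
    have h2 : ∀ j ∈ Finset.range (k + 1),
        ContinuousLinearMap.adjoint T * ((k.choose j : ℂ) • beta T (n + j)) * T
          = (k.choose j : ℂ) • (beta T (n + j) + beta T (n + j + 1)) := by
      intro j _
      rw [mul_smul_comm, smul_mul_assoc, beta_conj]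
    rw [Finset.sum_congr rfl h2]
    have := beta_aux2 (fun j => beta T (n + j)) k
    simpa [add_assoc] using this
end

section
/- Let T be a bounded m-isometry on a complex Hilbert space (β_m(T) = 0). Then for every x ∈ H, the function k ↦ ‖T^k x‖² is a polynomial in k of degree at most m−1; in particular ‖T^k x‖² = ∑_{j=0}^{m-1} C(k,j) ⟨β_j(T) x, x⟩. -/
open ContinuousLinearMap Finset

variable {H : Type*} [NormedAddCommGroup H] [InnerProductSpace ℂ H] [CompleteSpace H]

lemma beta_succ (T : H →L[ℂ] H) (n : ℕ) :
    beta T (n + 1) = ContinuousLinearMap.adjoint T * beta T n * T - beta T n := by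
  have hmid : ContinuousLinearMap.adjoint T * beta T n * T
      = ∑ j ∈ range (n + 1), ((-1 : ℂ) ^ (n - j) * (n.choose j : ℂ)) •
          ((ContinuousLinearMap.adjoint T) ^ (j+1) * T ^ (j+1)) := by
    rw [beta, Finset.mul_sum, Finset.sum_mul]
    refine Finset.sum_congr rfl fun j hj => ?_
    rw [mul_smul_comm, smul_mul_assoc]
    congr 1
    rw [pow_succ' (ContinuousLinearMap.adjoint T), pow_succ T]
    simp [mul_assoc]
  have hext : ∑ j ∈ range n, ((-1 : ℂ) ^ (n - (j+1)) * (n.choose (j+1) : ℂ)) •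
      ((ContinuousLinearMap.adjoint T) ^ (j+1) * T ^ (j+1))
      = ∑ j ∈ range (n+1), ((-1 : ℂ) ^ (n - (j+1)) * (n.choose (j+1) : ℂ)) •
      ((ContinuousLinearMap.adjoint T) ^ (j+1) * T ^ (j+1)) := by
    rw [Finset.sum_range_succ]
    simp [Nat.choose_succ_self]
  rw [hmid, beta, beta,
    Finset.sum_range_succ' (fun j => ((-1 : ℂ) ^ (n + 1 - j) * ((n+1).choose j : ℂ)) •
      ((ContinuousLinearMap.adjoint T) ^ j * T ^ j)) (n+1),
    Finset.sum_range_succ' (fun j => ((-1 : ℂ) ^ (n - j) * (n.choose j : ℂ)) •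
      ((ContinuousLinearMap.adjoint T) ^ j * T ^ j)) n]
  rw [sub_add_eq_sub_sub, hext, ← Finset.sum_sub_distrib, sub_eq_add_neg]
  congr 1
  · refine Finset.sum_congr rfl fun j hj => ?_
    rw [← sub_smul]
    congr 1
    rw [Finset.mem_range] at hj
    rcases eq_or_lt_of_le (Nat.lt_succ_iff.mp hj) with h | h
    · subst h
      simp [Nat.choose_succ_self]
    · have h1 : n + 1 - (j + 1) = n - j := by omega
      have h2 : n - j = (n - (j + 1)) + 1 := by omega
      rw [h1, Nat.choose_succ_succ, h2, pow_succ]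
      push_cast
      ring
  · show ((-1 : ℂ) ^ (n + 1 - 0) * ((n+1).choose 0 : ℂ)) • _ = _
    rw [show n + 1 - 0 = (n - 0) + 1 from rfl, pow_succ]
    simp [← neg_smul]

lemma beta_eq_zero (T : H →L[ℂ] H) (m : ℕ) (hT : beta T m = 0) :
    ∀ n, m ≤ n → beta T n = 0 := by
  intro n hn
  induction n, hn using Nat.le_induction with
  | base => exact hT
  | succ n hn ih => rw [beta_succ, ih, mul_zero, zero_mul, sub_zero]

lemma pow_mul_pow_eq (T : H →L[ℂ] H) (k : ℕ) :
    (ContinuousLinearMap.adjoint T) ^ k * T ^ k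
      = ∑ j ∈ Finset.range (k + 1), (k.choose j : ℂ) • beta T j := by
  induction k with
  | zero => simp [beta]
  | succ k ih =>
    have step : (ContinuousLinearMap.adjoint T) ^ (k+1) * T ^ (k+1)
        = ContinuousLinearMap.adjoint T * ((ContinuousLinearMap.adjoint T) ^ k * T ^ k) * T := by
      rw [pow_succ' (ContinuousLinearMap.adjoint T), pow_succ T]
      simp [mul_assoc]
    rw [step, ih, Finset.mul_sum, Finset.sum_mul]
    have hterm : ∀ j ∈ Finset.range (k+1),
        ContinuousLinearMap.adjoint T * ((k.choose j : ℂ) • beta T j) * T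
          = (k.choose j : ℂ) • (beta T (j+1) + beta T j) := by
      intro j _
      rw [mul_smul_comm, smul_mul_assoc, beta_succ]
      congr 1
      abel
    rw [Finset.sum_congr rfl hterm]
    simp only [smul_add]
    rw [Finset.sum_add_distrib,
      Finset.sum_range_succ' (fun j => ((k+1).choose j : ℂ) • beta T j) (k+1)]
    have hext : ∑ j ∈ Finset.range (k+1), ((k.choose j : ℂ)) • beta T j
        = ∑ j ∈ Finset.range k, ((k.choose (j+1) : ℂ)) • beta T (j+1) + (k.choose 0 : ℂ) • beta T 0 := by
      rw [Finset.sum_range_succ' (fun j => (k.choose j : ℂ) • beta T j) k]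
    have hext2 : ∑ j ∈ Finset.range k, ((k.choose (j+1) : ℂ)) • beta T (j+1)
        = ∑ j ∈ Finset.range (k+1), ((k.choose (j+1) : ℂ)) • beta T (j+1) := by
      rw [Finset.sum_range_succ]
      simp [Nat.choose_succ_self]
    rw [hext, hext2, ← add_assoc, ← Finset.sum_add_distrib]
    congr 1
    · refine Finset.sum_congr rfl fun j hj => ?_
      rw [← add_smul]
      congr 1
      rw [Nat.choose_succ_succ]
      push_cast
      ring
    · simp

lemma norm_eq (T : H →L[ℂ] H) (m : ℕ) (hT : beta T m = 0) (x : H) (k : ℕ) :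
    ‖(T ^ k) x‖ ^ 2
      = ∑ j ∈ Finset.range m, (k.choose j : ℝ) * (inner ℂ x ((beta T j) x) : ℂ).re := by
  have h1 : ‖(T ^ k) x‖ ^ 2
      = (inner ℂ x ((((ContinuousLinearMap.adjoint T) ^ k * T ^ k)) x) : ℂ).re := by
    have h : (((ContinuousLinearMap.adjoint T) ^ k * T ^ k)) x
        = (ContinuousLinearMap.adjoint (T ^ k)) ((T ^ k) x) := by
      rw [← star_eq_adjoint, ← star_pow, star_eq_adjoint]; rfl
    rw [h, adjoint_inner_right]
    have := inner_self_eq_norm_sq (𝕜 := ℂ) ((T ^ k) x)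
    simpa using this.symm
  have h2 : (inner ℂ x ((((ContinuousLinearMap.adjoint T) ^ k * T ^ k)) x) : ℂ).re
      = ∑ j ∈ Finset.range (k + 1), (k.choose j : ℝ) * (inner ℂ x ((beta T j) x) : ℂ).re := by
    rw [pow_mul_pow_eq]
    rw [ContinuousLinearMap.sum_apply, inner_sum, Complex.re_sum]
    refine Finset.sum_congr rfl fun j _ => ?_
    rw [ContinuousLinearMap.smul_apply, inner_smul_right]
    rw [show ((k.choose j : ℂ)) = (((k.choose j : ℝ)) : ℂ) by push_cast; ring]
    simp [Complex.mul_re]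
  rw [h1, h2]
  set f : ℕ → ℝ := fun j => (k.choose j : ℝ) * (inner ℂ x ((beta T j) x) : ℂ).re with hf
  have e1 : ∑ j ∈ Finset.range (k + 1), f j = ∑ j ∈ Finset.range (max (k + 1) m), f j := by
    refine Finset.sum_subset (Finset.range_subset_range.2 (le_max_left _ _)) ?_
    intro j _ hj
    rw [Finset.mem_range, not_lt] at hj
    simp [hf, Nat.choose_eq_zero_of_lt (by omega : k < j)]
  have e2 : ∑ j ∈ Finset.range m, f j = ∑ j ∈ Finset.range (max (k + 1) m), f j := by
    refine Finset.sum_subset (Finset.range_subset_range.2 (le_max_right _ _)) ?_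
    intro j _ hj
    rw [Finset.mem_range, not_lt] at hj
    simp [hf, beta_eq_zero T m hT j hj]
  rw [e1, ← e2]

theorem norm_pow_apply_polynomial (T : H →L[ℂ] H) (m : ℕ) (hm : 1 ≤ m)
    (hT : beta T m = 0) (x : H) :
    (∀ k : ℕ, ‖(T ^ k) x‖ ^ 2
        = ∑ j ∈ Finset.range m, (k.choose j : ℝ) * (inner ℂ x ((beta T j) x) : ℂ).re) ∧
    ∃ p : Polynomial ℝ, p.natDegree ≤ m - 1 ∧ ∀ k : ℕ, ‖(T ^ k) x‖ ^ 2 = p.eval (k : ℝ) := by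
  refine ⟨norm_eq T m hT x, ?_⟩
  refine ⟨∑ j ∈ Finset.range m,
    ((inner ℂ x ((beta T j) x) : ℂ).re / (j.factorial : ℝ)) • descPochhammer ℝ j, ?_, ?_⟩
  · refine Polynomial.natDegree_sum_le_of_forall_le _ _ fun j hj => ?_
    refine (Polynomial.natDegree_smul_le _ _).trans ?_
    rw [descPochhammer_natDegree]
    rw [Finset.mem_range] at hj
    omega
  · intro k
    rw [norm_eq T m hT x k, Polynomial.eval_finset_sum]
    refine Finset.sum_congr rfl fun j _ => ?_
    rw [Polynomial.eval_smul, smul_eq_mul, descPochhammer_eval_eq_descFactorial,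
      Nat.descFactorial_eq_factorial_mul_choose]
    have hfac : (j.factorial : ℝ) ≠ 0 := by positivity
    push_cast
    field_simp
end

section
/- Let T be a bounded m-isometry on a complex Hilbert space H. Then the operator β_{m−1}(T) is positive semidefinite, i.e. ⟨β_{m−1}(T) x, x⟩ ≥ 0 for all x ∈ H. -/
open ContinuousLinearMap fwdDiff

variable {H : Type*} [NormedAddCommGroup H] [InnerProductSpace ℂ H] [CompleteSpace H]

private lemma beta_inner_aux (T : H →L[ℂ] H) (n : ℕ) (y : H) :
    (inner ℂ y ((beta T n) y) : ℂ)
      = ((∑ j ∈ Finset.range (n + 1),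
          (-1 : ℝ) ^ (n - j) * (n.choose j : ℝ) * ‖(T ^ j) y‖ ^ 2 : ℝ) : ℂ) := by
  rw [beta, ContinuousLinearMap.sum_apply, inner_sum, Complex.ofReal_sum]
  refine Finset.sum_congr rfl fun j _ => ?_
  rw [ContinuousLinearMap.smul_apply, inner_smul_right, ContinuousLinearMap.mul_apply]
  have hadj : (ContinuousLinearMap.adjoint T) ^ j = ContinuousLinearMap.adjoint (T ^ j) := by
    rw [← star_eq_adjoint, ← star_eq_adjoint, ← star_pow]
  rw [hadj, ContinuousLinearMap.adjoint_inner_right, inner_self_eq_norm_sq_to_K]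
  push_cast
  norm_num


private lemma choose_mono_half {n k q : ℕ} (hk : k ≤ q) (hq : q ≤ n / 2) :
    n.choose k ≤ n.choose q := by
  induction q with
  | zero => simp [Nat.le_zero.mp hk]
  | succ q ih =>
    rcases Nat.lt_or_ge k (q + 1) with h | h
    · exact le_trans (ih (Nat.lt_succ_iff.mp h) (le_trans (Nat.le_succ q) hq))
        (Nat.choose_le_succ_of_lt_half_left (Nat.lt_of_succ_le hq))
    · rw [le_antisymm hk h]

private lemma scalar_key (p : ℕ) (b : ℕ → ℝ)
    (hb : ∀ n, p ≤ n → 0 ≤ ∑ k ∈ Finset.range (p + 1), (n.choose k : ℝ) * b k) :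
    0 ≤ b p := by
  by_contra hneg
  push_neg at hneg
  rcases Nat.eq_zero_or_pos p with rfl | hp
  · have := hb 0 le_rfl
    simp at this
    linarith
  obtain ⟨q, rfl⟩ : ∃ q, p = q + 1 := ⟨p - 1, (Nat.succ_pred_eq_of_pos hp).symm⟩
  set p := q + 1
  set M : ℝ := ∑ k ∈ Finset.range p, |b k| with hM
  have hM0 : 0 ≤ M := Finset.sum_nonneg fun k _ => abs_nonneg _
  set N : ℕ := ⌈(p : ℝ) * M / (-b p)⌉₊ + 1 with hN
  set n : ℕ := 2 * p + N with hn
  have hpn : p ≤ n := by omega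
  have hqhalf : q ≤ n / 2 := by omega
  -- bound the sum
  have hsum := hb n hpn
  rw [Finset.sum_range_succ] at hsum
  have hbd : ∑ k ∈ Finset.range p, (n.choose k : ℝ) * b k ≤ (n.choose q : ℝ) * M := by
    rw [hM, Finset.mul_sum]
    refine Finset.sum_le_sum fun k hk => ?_
    have hkq : k ≤ q := by have := Finset.mem_range.mp hk; omega
    have h1 : (n.choose k : ℝ) * b k ≤ (n.choose k : ℝ) * |b k| := by
      have := le_abs_self (b k)
      have : b k ≤ |b k| := this
      exact mul_le_mul_of_nonneg_left this (by positivity)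
    refine h1.trans (mul_le_mul_of_nonneg_right ?_ (abs_nonneg _))
    exact_mod_cast choose_mono_half hkq hqhalf
  have hkey : 0 ≤ (n.choose q : ℝ) * M + (n.choose p : ℝ) * b p := by linarith
  -- identity: choose n p * p = choose n q * (n - q)
  have hid : (n.choose p : ℝ) * p = (n.choose q : ℝ) * ((n : ℝ) - q) := by
    have := Nat.choose_succ_right_eq n q
    have hcast := congrArg (Nat.cast : ℕ → ℝ) this
    push_cast [Nat.cast_sub (by omega : q ≤ n)] at hcast
    exact_mod_cast hcast
  -- largeness: (n - q) * (-b p) > p * M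
  have hlarge : (p : ℝ) * M < ((n : ℝ) - q) * (-b p) := by
    have h1 : (p : ℝ) * M / (-b p) ≤ (N : ℝ) := by
      calc (p : ℝ) * M / (-b p) ≤ ⌈(p : ℝ) * M / (-b p)⌉₊ := Nat.le_ceil _
        _ ≤ N := by exact_mod_cast Nat.le_succ _
    have hb' : (0 : ℝ) < -b p := by linarith
    have h2 : (p : ℝ) * M ≤ (N : ℝ) * (-b p) := by
      rw [div_le_iff₀ hb'] at h1; linarith
    have h3 : (N : ℝ) < (n : ℝ) - q := by
      have : (q : ℝ) + N < n := by
        have : q + N < n := by omega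
        exact_mod_cast this
      linarith
    nlinarith
  have hchoosepos : (0 : ℝ) < n.choose p := by
    exact_mod_cast Nat.choose_pos hpn
  have hqpos : (0 : ℝ) ≤ n.choose q := by positivity
  -- combine
  have hnq : (0:ℝ) < (n:ℝ) - q := by
    have : (q:ℝ) < n := by exact_mod_cast (by omega : q < n)
    linarith
  nlinarith [mul_le_mul_of_nonneg_left hkey (le_of_lt hnq)]

private lemma iter_fwdDiff_zero (j : ℕ) :
    (Δ_[(1:ℕ)])^[j] (fun _ => (0:ℝ)) = fun _ => 0 := by
  induction j with
  | zero => rfl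
  | succ j ih =>
    rw [Function.iterate_succ_apply,
      show (Δ_[(1:ℕ)]) (fun _ => (0:ℝ)) = fun _ => 0 from funext fun t => by simp [fwdDiff], ih]

theorem beta_pred_positive (T : H →L[ℂ] H) (m : ℕ) (hm : 1 ≤ m)
    (hT : beta T m = 0) (x : H) :
    0 ≤ (inner ℂ x ((beta T (m - 1)) x) : ℂ).re ∧ (inner ℂ x ((beta T (m - 1)) x) : ℂ).im = 0 := by
  set a : ℕ → ℝ := fun n => ‖(T ^ n) x‖ ^ 2 with ha
  -- iterated forward differences vanish from order m on
  have hdiff : ∀ i, (Δ_[1])^[m] a i = 0 := by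
    intro i
    have h0 : (inner ℂ ((T ^ i) x) ((beta T m) ((T ^ i) x)) : ℂ) = 0 := by
      rw [hT]; simp
    rw [beta_inner_aux] at h0
    have h1 : ∑ j ∈ Finset.range (m + 1),
        (-1 : ℝ) ^ (m - j) * (m.choose j : ℝ) * ‖(T ^ j) ((T ^ i) x)‖ ^ 2 = 0 := by
      exact_mod_cast h0
    rw [fwdDiff_iter_eq_sum_shift]
    rw [← h1]
    refine Finset.sum_congr rfl fun k _ => ?_
    have : (T ^ k) ((T ^ i) x) = (T ^ (i + k)) x := by
      rw [← ContinuousLinearMap.mul_apply, ← pow_add, add_comm]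
    rw [this]
    simp [ha, zsmul_eq_mul]
  -- Newton's formula: for n, a n = sum over range (n+1) of C(n,k) * Δ^[k] a 0
  set b : ℕ → ℝ := fun k => (Δ_[1])^[k] a 0 with hbdef
  have hvanish : ∀ k, m ≤ k → b k = 0 := by
    intro k hk
    obtain ⟨j, rfl⟩ := Nat.exists_eq_add_of_le hk
    have h1 : (Δ_[(1:ℕ)])^[m + j] a = (Δ_[(1:ℕ)])^[j] ((Δ_[(1:ℕ)])^[m] a) := by
      rw [add_comm]; exact Function.iterate_add_apply _ j m a
    have hz : (Δ_[(1:ℕ)])^[m] a = fun _ => (0:ℝ) := funext hdiff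
    simp only [hbdef, h1, hz, iter_fwdDiff_zero]
  have hnewton : ∀ n, m - 1 ≤ n → a n = ∑ k ∈ Finset.range m, (n.choose k : ℝ) * b k := by
    intro n hn
    have h := shift_eq_sum_fwdDiff_iter (1:ℕ) a n 0
    simp only [zero_add, smul_eq_mul, mul_one] at h
    have hzero : ∀ k ∈ Finset.range (n+1), k ∉ Finset.range m →
        n.choose k • (Δ_[(1:ℕ)])^[k] a 0 = 0 := by
      intro k _ hk
      rw [Finset.mem_range, not_lt] at hk
      rw [show (Δ_[(1:ℕ)])^[k] a 0 = b k from rfl, hvanish k hk, smul_zero]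
    rw [h, ← Finset.sum_subset (Finset.range_subset_range.mpr (show m ≤ n+1 by omega)) hzero]
    exact Finset.sum_congr rfl fun k _ => nsmul_eq_mul _ _
  -- positivity of b (m-1)
  have hbpos : 0 ≤ b (m - 1) := by
    refine scalar_key (m - 1) b fun n hn => ?_
    have h := hnewton n hn
    rw [show m - 1 + 1 = m by omega] at *
    rw [← h]
    positivity
  -- conclude
  have hfinal : (inner ℂ x ((beta T (m - 1)) x) : ℂ) = (b (m - 1) : ℂ) := by
    rw [beta_inner_aux]
    congr 1
    have hb' : b (m - 1) = (Δ_[(1:ℕ)])^[m - 1] a 0 := rfl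
    rw [hb', fwdDiff_iter_eq_sum_shift]
    refine Finset.sum_congr rfl fun k _ => ?_
    simp [ha, zsmul_eq_mul]
  rw [hfinal]
  simp [hbpos]
end

section
/- For an analytic polynomial f(z) = ∑_{k≥0} a_k z^k, define D_{λ,n}(f) = ∑_{k≥0} C(k,n) |a_k|². Then D_{λ,n}(f') is comparable to |a_{n+1}|² + D_{λ,n+2}(f), and also comparable to D_{λ,n+1}(f) + D_{λ,n+2}(f), with comparability constants depending only on n. Specifically D_{λ,n}(f') = ∑_{k≥n} C(k,n)(k+1)² |a_{k+1}|². -/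
/-- `D_{λ,n}(f) = ∑_k C(k,n) |a_k|²` for a coefficient sequence supported in `Finset.range M`. -/
noncomputable def DL (n : ℕ) (a : ℕ → ℂ) (M : ℕ) : ℝ :=
  ∑ k ∈ Finset.range M, (k.choose n : ℝ) * ‖a k‖ ^ 2

lemma key1 (n k : ℕ) : (n+1) * (k+1).choose (n+1) = (k+1) * k.choose n := by
  simpa [Nat.succ_eq_add_one, mul_comm] using (Nat.add_one_mul_choose_eq k n).symm

lemma key2 (n k : ℕ) : (n+1) * ((n+2) * (k+1).choose (n+2)) = (k+1) * ((k-n) * k.choose n) := by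
  have h1 := key1 (n+1) k
  have h2 := Nat.choose_succ_right_eq k n
  calc (n+1) * ((n+2) * (k+1).choose (n+2)) = (n+1) * ((k+1) * k.choose (n+1)) := by rw [h1]
    _ = (k+1) * (k.choose (n+1) * (n+1)) := by ring
    _ = (k+1) * (k.choose n * (k - n)) := by rw [h2]
    _ = (k+1) * ((k-n) * k.choose n) := by ring

lemma I1a (n k : ℕ) : (k+1).choose (n+2) ≤ (k+1)^2 * k.choose n := by
  calc (k+1).choose (n+2) ≤ (n+2) * (k+1).choose (n+2) := Nat.le_mul_of_pos_left _ (by omega)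
    _ ≤ (n+1) * ((n+2) * (k+1).choose (n+2)) := Nat.le_mul_of_pos_left _ (by omega)
    _ = (k+1) * ((k-n) * k.choose n) := key2 n k
    _ ≤ (k+1) * ((k+1) * k.choose n) := by
        exact Nat.mul_le_mul_left _ (Nat.mul_le_mul_right _ (by omega))
    _ = (k+1)^2 * k.choose n := by ring

lemma I1b (n k : ℕ) : (k+1).choose (n+1) ≤ (k+1)^2 * k.choose n := by
  calc (k+1).choose (n+1) ≤ (n+1) * (k+1).choose (n+1) := Nat.le_mul_of_pos_left _ (by omega)
    _ = (k+1) * k.choose n := key1 n k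
    _ ≤ (k+1) * ((k+1) * k.choose n) := Nat.le_mul_of_pos_left _ (by omega)
    _ = (k+1)^2 * k.choose n := by ring

lemma I2 (n k : ℕ) : (k+1)^2 * k.choose n ≤ (n+2)^3 * ((k+1).choose (n+2) + (if k = n then 1 else 0)) := by
  rcases lt_trichotomy k n with h | h | h
  · rw [Nat.choose_eq_zero_of_lt h]
    simp
  · subst h
    rw [Nat.choose_self, Nat.choose_eq_zero_of_lt (Nat.lt_succ_self _), if_pos rfl]
    nlinarith [Nat.zero_le (k^3), Nat.zero_le (k^2), Nat.zero_le k]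
  · obtain ⟨t, rfl⟩ : ∃ t, k = n + t + 1 := ⟨k - n - 1, by omega⟩
    set c := (n+t+1).choose n with hc
    set B := (n+t+2).choose (n+2) with hB
    have hk : (n+1) * ((n+2) * B) = (n+t+2) * ((t+1) * c) := by
      have := key2 n (n+t+1)
      simpa [show n+t+1-n = t+1 by omega] using this
    rw [if_neg (by omega : ¬ n + t + 1 = n)]
    have hbr : (n+1)*(n+t+2) ≤ (n+2)^2*(t+1) := by
      nlinarith [Nat.zero_le (n*n*t), Nat.zero_le (n*t), Nat.zero_le t, Nat.zero_le n]
    have step : (n+1)*((n+t+1+1)^2*c) ≤ (n+1)*((n+2)^3*(B+0)) := by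
      calc (n+1)*((n+t+1+1)^2*c) = ((n+1)*(n+t+2))*((n+t+2)*c) := by ring
        _ ≤ ((n+2)^2*(t+1))*((n+t+2)*c) := Nat.mul_le_mul_right _ hbr
        _ = (n+2)^2*((n+t+2)*((t+1)*c)) := by ring
        _ = (n+2)^2*((n+1)*((n+2)*B)) := by rw [hk]
        _ = (n+1)*((n+2)^3*(B+0)) := by ring
    exact Nat.le_of_mul_le_mul_left step (by omega)

lemma I3 (n k : ℕ) : (k+1).choose (n+1) + (k+1).choose (n+2) ≤ 2 * ((k+1)^2 * k.choose n) := by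
  have h1 := I1b n k
  have h2 := I1a n k
  omega

lemma I4 (n k : ℕ) : (k+1)^2 * k.choose n ≤ (n+2)^2 * ((k+1).choose (n+1) + (k+1).choose (n+2)) := by
  rcases Nat.lt_or_ge k n with h | h
  · rw [Nat.choose_eq_zero_of_lt h]; simp
  · obtain ⟨t, rfl⟩ : ∃ t, k = n + t := ⟨k - n, by omega⟩
    set c := (n+t).choose n with hc
    set A := (n+t+1).choose (n+1) with hA
    set B := (n+t+1).choose (n+2) with hB
    have h1 : (n+1) * A = (n+t+1) * c := key1 n (n+t)
    have h2 : (n+1) * ((n+2) * B) = (n+t+1) * (t * c) := by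
      have := key2 n (n+t)
      simpa [show n+t-n = t by omega] using this
    have hAB : (n+1)*((n+2)*(A+B)) = (n+t+1)*((n+t+2)*c) := by
      calc (n+1)*((n+2)*(A+B)) = (n+2)*((n+1)*A) + (n+1)*((n+2)*B) := by ring
        _ = (n+2)*((n+t+1)*c) + (n+t+1)*(t*c) := by rw [h1, h2]
        _ = (n+t+1)*((n+t+2)*c) := by ring
    have hbr : (n+1)*(n+t+1) ≤ (n+2)*(n+t+2) := by
      nlinarith [Nat.zero_le (n*t), Nat.zero_le t, Nat.zero_le n]
    have step : (n+1)*((n+2)*((n+t+1)^2*c)) ≤ (n+1)*((n+2)*((n+2)^2*(A+B))) := by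
      calc (n+1)*((n+2)*((n+t+1)^2*c)) = ((n+1)*(n+t+1))*((n+2)*((n+t+1)*c)) := by ring
        _ ≤ ((n+2)*(n+t+2))*((n+2)*((n+t+1)*c)) := Nat.mul_le_mul_right _ hbr
        _ = (n+2)^2*((n+t+1)*((n+t+2)*c)) := by ring
        _ = (n+2)^2*((n+1)*((n+2)*(A+B))) := by rw [hAB]
        _ = (n+1)*((n+2)*((n+2)^2*(A+B))) := by ring
    have h3 := Nat.le_of_mul_le_mul_left step (by omega)
    exact Nat.le_of_mul_le_mul_left h3 (by omega)

lemma DL_shift (m : ℕ) (hm : 0 < m) (a : ℕ → ℂ) (M : ℕ) (ha : ∀ k, M ≤ k → a k = 0) :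
    DL m a M = ∑ k ∈ Finset.range M, (((k+1).choose m : ℝ)) * ‖a (k+1)‖ ^ 2 := by
  unfold DL
  have h1 : (∑ k ∈ Finset.range M, ((k).choose m : ℝ) * ‖a k‖ ^ 2)
      = ∑ k ∈ Finset.range (M+1), ((k).choose m : ℝ) * ‖a k‖ ^ 2 := by
    rw [Finset.sum_range_succ, ha M le_rfl]
    simp
  rw [h1, Finset.sum_range_succ' (fun k => ((k).choose m : ℝ) * ‖a k‖ ^ 2) M]
  rw [Nat.choose_eq_zero_of_lt hm]
  simp

lemma absTerm_eq (a : ℕ → ℂ) (M n : ℕ) (ha : ∀ k, M ≤ k → a k = 0) :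
    ‖a (n+1)‖ ^ 2
      = ∑ k ∈ Finset.range M, (if k = n then (1:ℝ) else 0) * ‖a (k+1)‖ ^ 2 := by
  have h : ∑ k ∈ Finset.range M, (if k = n then (1:ℝ) else 0) * ‖a (k+1)‖ ^ 2
      = ∑ k ∈ Finset.range M, (if k = n then ‖a (k+1)‖ ^ 2 else 0) := by
    apply Finset.sum_congr rfl; intro k _; split <;> simp
  rw [h, Finset.sum_ite_eq' (Finset.range M) n (fun k => ‖a (k+1)‖^2)]
  by_cases hn : n ∈ Finset.range M
  · rw [if_pos hn]
  · rw [if_neg hn, ha (n+1) (by simp at hn; omega)]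
    simp

lemma DL_deriv (n : ℕ) (a : ℕ → ℂ) (M : ℕ) :
    DL n (fun k => ((k:ℂ)+1) * a (k+1)) M
      = ∑ k ∈ Finset.range M, (k.choose n : ℝ) * ((k:ℝ)+1)^2 * ‖a (k+1)‖ ^ 2 := by
  unfold DL
  apply Finset.sum_congr rfl
  intro k _
  simp only [norm_mul]
  have h : ‖(k:ℂ)+1‖ = (k:ℝ)+1 := by
    rw [show ((k:ℂ)+1) = ((k+1:ℕ):ℂ) by push_cast; ring, Complex.norm_natCast]
    push_cast; ring
  rw [h]; ring

theorem littlewood_paley_comparability (n : ℕ) :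
    ∃ c₁ C₁ c₂ C₂ : ℝ, 0 < c₁ ∧ 0 < C₁ ∧ 0 < c₂ ∧ 0 < C₂ ∧
      ∀ (a : ℕ → ℂ) (M : ℕ), (∀ k, M ≤ k → a k = 0) →
        (DL n (fun k => ((k : ℂ) + 1) * a (k + 1)) M
            = ∑ k ∈ Finset.range M,
                (k.choose n : ℝ) * ((k : ℝ) + 1) ^ 2 * ‖a (k + 1)‖ ^ 2) ∧
        c₁ * (‖a (n + 1)‖ ^ 2 + DL (n + 2) a M)
            ≤ DL n (fun k => ((k : ℂ) + 1) * a (k + 1)) M ∧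
        DL n (fun k => ((k : ℂ) + 1) * a (k + 1)) M
            ≤ C₁ * (‖a (n + 1)‖ ^ 2 + DL (n + 2) a M) ∧
        c₂ * (DL (n + 1) a M + DL (n + 2) a M)
            ≤ DL n (fun k => ((k : ℂ) + 1) * a (k + 1)) M ∧
        DL n (fun k => ((k : ℂ) + 1) * a (k + 1)) M
            ≤ C₂ * (DL (n + 1) a M + DL (n + 2) a M) := by
  refine ⟨1/2, ((n:ℝ)+2)^3, 1/2, ((n:ℝ)+2)^2, by norm_num, by positivity, by norm_num,
    by positivity, ?_⟩
  intro a M ha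
  have hD := DL_deriv n a M
  have h2 := DL_shift (n+2) (by omega) a M ha
  have h1 := DL_shift (n+1) (by omega) a M ha
  have hA := absTerm_eq a M n ha
  have hn0 : (0:ℝ) ≤ (n:ℝ) := Nat.cast_nonneg n
  refine ⟨hD, ?_, ?_, ?_, ?_⟩
  · rw [hD, hA, h2, ← Finset.sum_add_distrib, Finset.mul_sum]
    apply Finset.sum_le_sum
    intro k _
    have hw : (0:ℝ) ≤ ‖a (k+1)‖ ^ 2 := by positivity
    have hk0 : (0:ℝ) ≤ (k:ℝ) := Nat.cast_nonneg k
    rcases eq_or_ne k n with rfl | hne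
    · rw [if_pos rfl, Nat.choose_eq_zero_of_lt (Nat.lt_succ_self _), Nat.choose_self]
      push_cast
      nlinarith [mul_le_mul_of_nonneg_right (show (1:ℝ) ≤ ((k:ℝ)+1)^2 by nlinarith) hw]
    · rw [if_neg hne]
      have h' : (((k+1).choose (n+2) : ℕ) : ℝ) ≤ ((k:ℝ)+1)^2 * (k.choose n : ℝ) := by
        exact_mod_cast I1a n k
      nlinarith [mul_le_mul_of_nonneg_right h' hw]
  · rw [hD, hA, h2, ← Finset.sum_add_distrib, Finset.mul_sum]
    apply Finset.sum_le_sum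
    intro k _
    have hw : (0:ℝ) ≤ ‖a (k+1)‖ ^ 2 := by positivity
    have hk0 : (0:ℝ) ≤ (k:ℝ) := Nat.cast_nonneg k
    rcases eq_or_ne k n with rfl | hne
    · rw [if_pos rfl, Nat.choose_eq_zero_of_lt (Nat.lt_succ_self _), Nat.choose_self]
      push_cast
      nlinarith [mul_le_mul_of_nonneg_right
        (show ((k:ℝ)+1)^2 ≤ ((k:ℝ)+2)^3 by nlinarith) hw]
    · rw [if_neg hne]
      have h := I2 n k
      rw [if_neg hne] at h
      have h' : ((k:ℝ)+1)^2 * (k.choose n : ℝ) ≤ ((n:ℝ)+2)^3 * ((k+1).choose (n+2) : ℝ) := by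
        exact_mod_cast h
      nlinarith [mul_le_mul_of_nonneg_right h' hw]
  · rw [hD, h1, h2, ← Finset.sum_add_distrib, Finset.mul_sum]
    apply Finset.sum_le_sum
    intro k _
    have hw : (0:ℝ) ≤ ‖a (k+1)‖ ^ 2 := by positivity
    have h' : (((k+1).choose (n+1) : ℕ) : ℝ) + (((k+1).choose (n+2) : ℕ) : ℝ)
        ≤ 2 * (((k:ℝ)+1)^2 * (k.choose n : ℝ)) := by
      exact_mod_cast I3 n k
    nlinarith [mul_le_mul_of_nonneg_right h' hw]
  · rw [hD, h1, h2, ← Finset.sum_add_distrib, Finset.mul_sum]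
    apply Finset.sum_le_sum
    intro k _
    have hw : (0:ℝ) ≤ ‖a (k+1)‖ ^ 2 := by positivity
    have h' : ((k:ℝ)+1)^2 * (k.choose n : ℝ)
        ≤ ((n:ℝ)+2)^2 * ((((k+1).choose (n+1) : ℕ) : ℝ) + (((k+1).choose (n+2) : ℕ) : ℝ)) := by
      exact_mod_cast I4 n k
    nlinarith [mul_le_mul_of_nonneg_right h' hw]
end

section
/- For every r ∈ [0, 1), the sum ∑_{k,l=1}^{∞} r^{k+l} / max(k,l) equals log(1/(1−r²)) + (2r/(1−r)) log(1/(1−r)) − (2/(1−r)) log(1/(1−r²)), and this quantity is bounded above by a constant multiple of r²/(1−r²) uniformly in r ∈ [0,1). -/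
open Real Finset

lemma inner_lt (r : ℝ) (hr1 : r < 1) (m : ℕ) :
    HasSum (fun n : ℕ => if n < m then r ^ (m + 1 + (n + 1)) / (m + 1) else 0)
      ((1 / (1 - r)) * (r * (r ^ (m + 1) / (m + 1)) - (r ^ 2) ^ (m + 1) / (m + 1))) := by
  have hr_ne : r ≠ 1 := ne_of_lt hr1
  have h := hasSum_sum_of_ne_finset_zero (L := SummationFilter.unconditional ℕ) (s := Finset.range m)
    (f := fun n : ℕ => if n < m then r ^ (m + 1 + (n + 1)) / (m + 1) else 0)
    (by intro b hb; simp only [Finset.mem_range] at hb; simp [hb])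
  convert h using 1
  rw [Finset.sum_congr rfl (fun n hn => if_pos (Finset.mem_range.mp hn))]
  have : ∀ n : ℕ, r ^ (m + 1 + (n + 1)) / (m + 1) = r ^ (m + 1) / (m + 1) * r ^ (n + 1) := by
    intro n; rw [pow_add]; ring
  rw [Finset.sum_congr rfl (fun n _ => this n), ← Finset.mul_sum]
  have hgeom : ∑ n ∈ Finset.range m, r ^ (n + 1) = (r ^ m - 1) / (r - 1) * r := by
    rw [Finset.sum_congr rfl (fun n _ => pow_succ r n), ← Finset.sum_mul, geom_sum_eq hr_ne]
  rw [hgeom]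
  have hm : ((m : ℝ) + 1) ≠ 0 := by positivity
  have h1 : r - 1 ≠ 0 := sub_ne_zero.mpr hr_ne
  have h2 : (1 : ℝ) - r ≠ 0 := sub_ne_zero.mpr (ne_of_gt (by linarith))
  have hp : ((r ^ 2) ^ (m + 1)) = (r ^ m * r) ^ 2 := by
    rw [← pow_succ, ← pow_mul, ← pow_mul, Nat.mul_comm]
  rw [hp, pow_succ]
  field_simp
  ring

lemma inner_le (r : ℝ) (hr1 : r < 1) (m : ℕ) :
    HasSum (fun n : ℕ => if n ≤ m then r ^ (n + 1 + (m + 1)) / (m + 1) else 0)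
      ((r / (1 - r)) * (r ^ (m + 1) / (m + 1) - (r ^ 2) ^ (m + 1) / (m + 1))) := by
  have hr_ne : r ≠ 1 := ne_of_lt hr1
  have h := hasSum_sum_of_ne_finset_zero (L := SummationFilter.unconditional ℕ) (s := Finset.range (m + 1))
    (f := fun n : ℕ => if n ≤ m then r ^ (n + 1 + (m + 1)) / (m + 1) else 0)
    (by intro b hb; simp only [Finset.mem_range, Nat.lt_succ_iff] at hb; simp [hb])
  convert h using 1
  rw [Finset.sum_congr rfl (fun n hn => if_pos (Nat.lt_succ_iff.mp (Finset.mem_range.mp hn)))]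
  have : ∀ n : ℕ, r ^ (n + 1 + (m + 1)) / (m + 1) = r ^ (m + 1) / (m + 1) * r ^ (n + 1) := by
    intro n; rw [pow_add]; ring
  rw [Finset.sum_congr rfl (fun n _ => this n), ← Finset.mul_sum]
  have hgeom : ∑ n ∈ Finset.range (m + 1), r ^ (n + 1) = (r ^ (m + 1) - 1) / (r - 1) * r := by
    rw [Finset.sum_congr rfl (fun n _ => pow_succ r n), ← Finset.sum_mul, geom_sum_eq hr_ne]
  rw [hgeom]
  have hm : ((m : ℝ) + 1) ≠ 0 := by positivity
  have h1 : r - 1 ≠ 0 := sub_ne_zero.mpr hr_ne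
  have h2 : (1 : ℝ) - r ≠ 0 := sub_ne_zero.mpr (ne_of_gt (by linarith))
  have hp : ((r ^ 2) ^ (m + 1)) = (r ^ m * r) ^ 2 := by
    rw [← pow_succ, ← pow_mul, ← pow_mul, Nat.mul_comm]
  rw [hp, pow_succ]
  field_simp
  ring

set_option maxHeartbeats 1000000 in
theorem double_log_sum :
    ∃ C : ℝ, 0 < C ∧ ∀ r : ℝ, 0 ≤ r → r < 1 →
      (∑' p : ℕ × ℕ, r ^ (p.1 + 1 + (p.2 + 1)) / (max (p.1 + 1) (p.2 + 1) : ℝ))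
          = Real.log (1 / (1 - r ^ 2)) + (2 * r / (1 - r)) * Real.log (1 / (1 - r))
            - (2 / (1 - r)) * Real.log (1 / (1 - r ^ 2)) ∧
      (∑' p : ℕ × ℕ, r ^ (p.1 + 1 + (p.2 + 1)) / (max (p.1 + 1) (p.2 + 1) : ℝ))
          ≤ C * (r ^ 2 / (1 - r ^ 2)) := by
  refine ⟨4, by norm_num, fun r hr0 hr1 => ?_⟩
  have h1r : (0:ℝ) < 1 - r := by linarith
  have h1rr : (0:ℝ) < 1 + r := by linarith
  have hr2lt : r ^ 2 < 1 := by nlinarith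
  have h1r2 : (0:ℝ) < 1 - r ^ 2 := by nlinarith
  have habs : |r| < 1 := abs_lt.mpr ⟨by linarith, hr1⟩
  have habs2 : |r ^ 2| < 1 := abs_lt.mpr ⟨by nlinarith, hr2lt⟩
  have hL : HasSum (fun n : ℕ => r ^ (n + 1) / (n + 1)) (-Real.log (1 - r)) :=
    Real.hasSum_pow_div_log_of_abs_lt_one habs
  have hM : HasSum (fun n : ℕ => (r ^ 2) ^ (n + 1) / (n + 1)) (-Real.log (1 - r ^ 2)) :=
    Real.hasSum_pow_div_log_of_abs_lt_one habs2
  set A := Real.log (1 - r) with hA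
  set B := Real.log (1 - r ^ 2) with hB
  set S1 : ℝ := (r / (1 - r)) * (-A - -B) with hS1
  set S2 : ℝ := (1 / (1 - r)) * (r * -A - -B) with hS2
  set F1 : ℕ × ℕ → ℝ := fun p => if p.1 ≤ p.2 then r ^ (p.1 + 1 + (p.2 + 1)) / (p.2 + 1) else 0
    with hF1def
  set G1 : ℕ × ℕ → ℝ := fun p => if p.2 ≤ p.1 then r ^ (p.2 + 1 + (p.1 + 1)) / (p.1 + 1) else 0
    with hG1def
  set F2 : ℕ × ℕ → ℝ := fun p => if p.2 < p.1 then r ^ (p.1 + 1 + (p.2 + 1)) / (p.1 + 1) else 0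
    with hF2def
  -- summability
  have hgeo : Summable (fun n : ℕ => r ^ (n + 1)) := by
    simpa [pow_succ] using (summable_geometric_of_lt_one hr0 hr1).mul_right r
  have hG : Summable (fun p : ℕ × ℕ => r ^ (p.1 + 1) * r ^ (p.2 + 1)) :=
    hgeo.mul_of_nonneg hgeo (fun n => pow_nonneg hr0 _) (fun n => pow_nonneg hr0 _)
  have hboundG1 : ∀ p : ℕ × ℕ, G1 p ≤ r ^ (p.1 + 1) * r ^ (p.2 + 1) := by
    intro p
    simp only [hG1def]
    split
    · rw [pow_add]
      calc r ^ (p.2 + 1) * r ^ (p.1 + 1) / (p.1 + 1) ≤ r ^ (p.2 + 1) * r ^ (p.1 + 1) := by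
            apply div_le_self (by positivity)
            exact_mod_cast Nat.one_le_iff_ne_zero.mpr (Nat.succ_ne_zero _)
        _ = r ^ (p.1 + 1) * r ^ (p.2 + 1) := by ring
    · positivity
  have hboundF2 : ∀ p : ℕ × ℕ, F2 p ≤ r ^ (p.1 + 1) * r ^ (p.2 + 1) := by
    intro p
    simp only [hF2def]
    split
    · rw [pow_add]
      apply div_le_self (by positivity)
      exact_mod_cast Nat.one_le_iff_ne_zero.mpr (Nat.succ_ne_zero _)
    · positivity
  have hG1nn : ∀ p : ℕ × ℕ, 0 ≤ G1 p := by
    intro p; simp only [hG1def]; split <;> positivity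
  have hF2nn : ∀ p : ℕ × ℕ, 0 ≤ F2 p := by
    intro p; simp only [hF2def]; split <;> positivity
  have hsumG1 : Summable G1 := Summable.of_nonneg_of_le hG1nn hboundG1 hG
  have hsumF2 : Summable F2 := Summable.of_nonneg_of_le hF2nn hboundF2 hG
  -- F2 has sum S2
  obtain ⟨a2, ha2⟩ := hsumF2
  have hfib2 : HasSum (fun m : ℕ =>
      (1 / (1 - r)) * (r * (r ^ (m + 1) / (m + 1)) - (r ^ 2) ^ (m + 1) / (m + 1))) a2 :=
    ha2.prod_fiberwise (fun m => inner_lt r hr1 m)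
  have hout2 : HasSum (fun m : ℕ =>
      (1 / (1 - r)) * (r * (r ^ (m + 1) / (m + 1)) - (r ^ 2) ^ (m + 1) / (m + 1))) S2 :=
    ((hL.mul_left r).sub hM).mul_left (1 / (1 - r))
  have hF2S : HasSum F2 S2 := (hfib2.unique hout2) ▸ ha2
  -- G1 has sum S1
  obtain ⟨a1, ha1⟩ := hsumG1
  have hfib1 : HasSum (fun m : ℕ =>
      (r / (1 - r)) * (r ^ (m + 1) / (m + 1) - (r ^ 2) ^ (m + 1) / (m + 1))) a1 :=
    ha1.prod_fiberwise (fun m => inner_le r hr1 m)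
  have hout1 : HasSum (fun m : ℕ =>
      (r / (1 - r)) * (r ^ (m + 1) / (m + 1) - (r ^ 2) ^ (m + 1) / (m + 1))) S1 :=
    (hL.sub hM).mul_left (r / (1 - r))
  have hG1S : HasSum G1 S1 := (hfib1.unique hout1) ▸ ha1
  have hF1S : HasSum F1 S1 := by
    have h := (Equiv.prodComm ℕ ℕ).hasSum_iff.mpr hG1S
    have heq : F1 = G1 ∘ ⇑(Equiv.prodComm ℕ ℕ) := by
      funext p
      simp only [hF1def, hG1def, Function.comp_apply, Equiv.prodComm_apply, Prod.fst_swap,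
        Prod.snd_swap]
      rfl
    rw [heq]
    exact h
  -- split
  have hsplit : ∀ p : ℕ × ℕ,
      r ^ (p.1 + 1 + (p.2 + 1)) / (max (p.1 + 1) (p.2 + 1) : ℝ) = F1 p + F2 p := by
    intro p
    rcases le_or_gt p.1 p.2 with h | h
    · have hc : ((p.1 : ℝ) + 1) ≤ ((p.2 : ℝ) + 1) := by
        have := (Nat.cast_le (α := ℝ)).mpr h; linarith
      simp only [hF1def, hF2def, if_pos h, if_neg (not_lt.mpr h), max_eq_right hc]
      ring
    · have hc : ((p.2 : ℝ) + 1) ≤ ((p.1 : ℝ) + 1) := by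
        have := (Nat.cast_le (α := ℝ)).mpr h.le; linarith
      simp only [hF1def, hF2def, if_neg (not_le.mpr h), if_pos h, max_eq_left hc]
      ring
  have htot : HasSum (fun p : ℕ × ℕ =>
      r ^ (p.1 + 1 + (p.2 + 1)) / (max (p.1 + 1) (p.2 + 1) : ℝ)) (S1 + S2) := by
    have heq : (fun p : ℕ × ℕ => r ^ (p.1 + 1 + (p.2 + 1)) / (max (p.1 + 1) (p.2 + 1) : ℝ))
        = fun p => F1 p + F2 p := funext hsplit
    rw [heq]
    exact hF1S.add hF2S
  have htsum := htot.tsum_eq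
  have hRHS : S1 + S2 = Real.log (1 / (1 - r ^ 2)) + (2 * r / (1 - r)) * Real.log (1 / (1 - r))
      - (2 / (1 - r)) * Real.log (1 / (1 - r ^ 2)) := by
    rw [one_div, one_div, Real.log_inv, Real.log_inv, ← hA, ← hB, hS1, hS2]
    field_simp
    ring
  constructor
  · rw [htsum, hRHS]
  · rw [htsum, hRHS, ← hRHS]
    -- bound S1 + S2 ≤ 4 * (r^2/(1-r^2))
    have hlogsplit : B = A + Real.log (1 + r) := by
      rw [hB, hA, show (1:ℝ) - r ^ 2 = (1 - r) * (1 + r) by ring,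
        Real.log_mul h1r.ne' h1rr.ne']
    set C := Real.log (1 + r) with hC
    have haA : A ≤ -r := by
      have := Real.log_le_sub_one_of_pos h1r
      rw [← hA] at this; linarith
    have hbC : C ≤ r := by
      have := Real.log_le_sub_one_of_pos h1rr
      rw [← hC] at this; linarith
    have hE : S1 + S2 = ((1 + r) * C + (1 - r) * A) / (1 - r) := by
      rw [hS1, hS2, hlogsplit]
      field_simp
      ring
    rw [hE, show (4:ℝ) * (r ^ 2 / (1 - r ^ 2)) = (4 * r ^ 2) / ((1 - r) * (1 + r)) by
      rw [show (1:ℝ) - r ^ 2 = (1 - r) * (1 + r) by ring]; ring,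
      div_le_div_iff₀ h1r (by positivity)]
    have hT : (1 + r) * C + (1 - r) * A ≤ 2 * r ^ 2 := by
      nlinarith [mul_le_mul_of_nonneg_left hbC h1rr.le, mul_le_mul_of_nonneg_left haA h1r.le]
    nlinarith [mul_le_mul_of_nonneg_right hT (mul_nonneg h1r.le h1rr.le),
      mul_nonneg (mul_nonneg (sq_nonneg r) h1r.le) h1r.le]
end

section
/- Let μ be a finite positive Borel measure on the unit circle 𝕋 and let P_μ(z) = ∫_𝕋 (1−|z|²)/|ζ−z|² dμ(ζ) be its Poisson extension to the open unit disc 𝔻. Then the measure ν with dν = P_μ dA (A area measure on 𝔻) is a Carleson measure: sup_{w ∈ 𝔻} ∫_𝔻 (1−|w|²)/|1−conj(w)z|² P_μ(z) dA(z) ≤ C μ(𝕋) for an absolute constant C. -/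
open MeasureTheory Set Metric

noncomputable def Complex.abs : AbsoluteValue ℂ ℝ where
  toFun z := ‖z‖
  map_mul' := norm_mul
  nonneg' := norm_nonneg
  eq_zero' _ := norm_eq_zero
  add_le' := norm_add_le

lemma Complex.norm_eq_abs (z : ℂ) : ‖z‖ = Complex.abs z := rfl

lemma Complex.abs_conj (z : ℂ) : Complex.abs ((starRingEnd ℂ) z) = Complex.abs z :=
  Complex.norm_conj z

lemma Complex.continuous_abs : Continuous Complex.abs := continuous_norm

lemma Complex.abs_ofReal (r : ℝ) : Complex.abs (r : ℂ) = |r| := by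
  show ‖(r : ℂ)‖ = |r|
  rw [Complex.norm_real, Real.norm_eq_abs]

lemma Complex.sq_abs (z : ℂ) : Complex.abs z ^ 2 = Complex.normSq z := Complex.sq_norm z



lemma pi_ennreal_le_four : (NNReal.pi : ENNReal) ≤ 4 := by
  have h4 : ((4 : NNReal) : ENNReal) = 4 := by norm_cast
  rw [← h4, ENNReal.coe_le_coe, ← NNReal.coe_le_coe]
  simpa using Real.pi_le_four

lemma vol_ball_le (c : ℂ) (r : ℝ) :
    volume (ball c r) ≤ ENNReal.ofReal (4 * r ^ 2) := by
  rw [Complex.volume_ball]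
  have h1 : ENNReal.ofReal r ^ 2 ≤ ENNReal.ofReal (r ^ 2) := by
    rcases le_or_gt 0 r with h | h
    · rw [ENNReal.ofReal_pow h]
    · simp [ENNReal.ofReal_of_nonpos h.le]
  calc ENNReal.ofReal r ^ 2 * NNReal.pi ≤ ENNReal.ofReal (r ^ 2) * 4 :=
        mul_le_mul' h1 pi_ennreal_le_four
  _ = ENNReal.ofReal (4 * r ^ 2) := by
      rw [← ENNReal.ofReal_ofNat 4, ← ENNReal.ofReal_mul (by positivity), mul_comm]

lemma dyadic_down {t R : ℝ} (h0 : 0 < t) (h1 : t < R) :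
    ∃ k : ℕ, R / 2 ^ (k + 1) ≤ t ∧ t < R / 2 ^ k := by
  have hex : ∃ n : ℕ, R ≤ t * 2 ^ n := by
    obtain ⟨n, hn⟩ := pow_unbounded_of_one_lt (R / t) (y := (2:ℝ)) one_lt_two
    exact ⟨n, by rw [div_lt_iff₀ h0] at hn; nlinarith⟩
  classical
  have hspec : R ≤ t * 2 ^ (Nat.find hex) := Nat.find_spec hex
  have hn0 : Nat.find hex ≠ 0 := by
    intro h
    rw [h] at hspec; simp at hspec; linarith
  obtain ⟨k, hk⟩ := Nat.exists_eq_succ_of_ne_zero hn0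
  rw [hk] at hspec
  have hmin : ¬ (R ≤ t * 2 ^ k) := Nat.find_min hex (by omega)
  push_neg at hmin
  refine ⟨k, ?_, ?_⟩
  · rw [div_le_iff₀ (by positivity)]
    simpa using hspec
  · rw [lt_div_iff₀ (by positivity)]
    nlinarith

lemma half_pow_tsum : ∑' k : ℕ, (ENNReal.ofReal (1/2)) ^ k = 2 := by
  rw [ENNReal.tsum_geometric]
  have : ENNReal.ofReal (1/2) = 2⁻¹ := by
    rw [one_div, ENNReal.ofReal_inv_of_pos (by norm_num), ENNReal.ofReal_ofNat]
  rw [this, ENNReal.one_sub_inv_two, inv_inv]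

/-- Base integral 1 : `∫_{ball c R} 1/|z-c| ≤ 16 R`. -/
lemma base1 (c : ℂ) (R : ℝ) :
    ∫⁻ z in ball c R, ENNReal.ofReal (1 / Complex.abs (z - c)) ≤ ENNReal.ofReal (16 * R) := by
  rcases le_or_gt R 0 with hR | hR
  · rw [ball_eq_empty.2 hR]
    simp
  -- annuli
  set S : ℕ → Set ℂ := fun k => {z | R / 2 ^ (k+1) ≤ Complex.abs (z - c) ∧ Complex.abs (z - c) < R / 2 ^ k} with hS
  have hSmeas : ∀ k, MeasurableSet (S k) := by
    intro k
    apply MeasurableSet.inter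
    · exact measurableSet_le measurable_const (Complex.continuous_abs.comp (continuous_id.sub continuous_const)).measurable
    · exact measurableSet_lt (Complex.continuous_abs.comp (continuous_id.sub continuous_const)).measurable measurable_const
  have hcover : ball c R ⊆ {c} ∪ ⋃ k, S k := by
    intro z hz
    rcases eq_or_ne z c with h | h
    · exact Or.inl (by simp [h])
    · refine Or.inr ?_
      have h0 : 0 < Complex.abs (z - c) := by
        simpa [sub_eq_zero] using (Complex.abs.pos (sub_ne_zero.2 h))
      have h1 : Complex.abs (z - c) < R := by
        rw [mem_ball, Complex.dist_eq] at hz; exact hz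
      obtain ⟨k, hk1, hk2⟩ := dyadic_down h0 h1
      exact mem_iUnion.2 ⟨k, hk1, hk2⟩
  calc ∫⁻ z in ball c R, ENNReal.ofReal (1 / Complex.abs (z - c))
      ≤ ∫⁻ z in ({c} ∪ ⋃ k, S k), ENNReal.ofReal (1 / Complex.abs (z - c)) :=
        lintegral_mono' (Measure.restrict_mono hcover le_rfl) le_rfl
    _ ≤ (∫⁻ z in ({c} : Set ℂ), ENNReal.ofReal (1 / Complex.abs (z - c)))
        + ∫⁻ z in (⋃ k, S k), ENNReal.ofReal (1 / Complex.abs (z - c)) :=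
        lintegral_union_le _ _ _
    _ ≤ 0 + ∑' k, ∫⁻ z in S k, ENNReal.ofReal (1 / Complex.abs (z - c)) := by
        gcongr
        · rw [Measure.restrict_eq_zero.2 (measure_singleton c)]; simp
        · exact lintegral_iUnion_le _ _
    _ ≤ ∑' k, ENNReal.ofReal (8 * R) * (ENNReal.ofReal (1/2))^k := by
        rw [zero_add]
        gcongr with k
        have hbound : ∫⁻ z in S k, ENNReal.ofReal (1 / Complex.abs (z - c))
            ≤ ∫⁻ _ in S k, ENNReal.ofReal (2 ^ (k+1) / R) := by
          refine lintegral_mono_ae ((ae_restrict_mem (hSmeas k)).mono fun z hz => ?_)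
          refine ENNReal.ofReal_le_ofReal ?_
          rw [div_le_div_iff₀ (lt_of_lt_of_le (by positivity) hz.1) (by positivity)]
          calc (1:ℝ) * R = R := one_mul R
          _ ≤ 2 ^ (k+1) * (R / 2 ^ (k+1)) := by rw [mul_div_cancel₀]; positivity
          _ ≤ 2 ^ (k+1) * Complex.abs (z - c) := by gcongr; exact hz.1
        refine hbound.trans ?_
        rw [setLIntegral_const]
        have hsub : S k ⊆ ball c (R / 2 ^ k) := fun z hz => by
          rw [mem_ball, Complex.dist_eq]; exact hz.2
        calc ENNReal.ofReal (2 ^ (k+1) / R) * volume (S k)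
            ≤ ENNReal.ofReal (2 ^ (k+1) / R) * ENNReal.ofReal (4 * (R / 2 ^ k) ^ 2) :=
              mul_le_mul_right ((measure_mono hsub).trans (vol_ball_le _ _)) _
          _ = ENNReal.ofReal (2 ^ (k+1) / R * (4 * (R / 2 ^ k) ^ 2)) :=
              (ENNReal.ofReal_mul (by positivity)).symm
          _ = ENNReal.ofReal (8 * R * (1/2)^k) := by
              congr 1
              field_simp
              rw [one_div_pow, mul_one_div, eq_div_iff (by positivity)]; ring
          _ = ENNReal.ofReal (8 * R) * (ENNReal.ofReal (1/2))^k := by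
              rw [ENNReal.ofReal_mul (by positivity), ENNReal.ofReal_pow (by norm_num)]
    _ = ENNReal.ofReal (8 * R) * 2 := by
        rw [ENNReal.tsum_mul_left, half_pow_tsum]
    _ = ENNReal.ofReal (16 * R) := by
        rw [← ENNReal.ofReal_ofNat 2, ← ENNReal.ofReal_mul (by positivity)]
        congr 1
        ring

/-- Dyadic localization upward: for `0 < a ≤ t` there is `k` with `a*2^k ≤ t < a*2^(k+1)`. -/
lemma dyadic_up {a t : ℝ} (ha : 0 < a) (ht : a ≤ t) :
    ∃ k : ℕ, a * 2 ^ k ≤ t ∧ t < a * 2 ^ (k + 1) := by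
  have hex : ∃ n : ℕ, t < a * 2 ^ n := by
    obtain ⟨n, hn⟩ := pow_unbounded_of_one_lt (t / a) (y := (2:ℝ)) one_lt_two
    exact ⟨n, by rw [div_lt_iff₀ ha] at hn; nlinarith⟩
  classical
  have hspec : t < a * 2 ^ (Nat.find hex) := Nat.find_spec hex
  have hn0 : Nat.find hex ≠ 0 := by
    intro h
    rw [h] at hspec
    simp at hspec
    linarith
  obtain ⟨k, hk⟩ := Nat.exists_eq_succ_of_ne_zero hn0
  rw [hk] at hspec
  have hmin : ¬ (t < a * 2 ^ k) := Nat.find_min hex (by omega)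
  push_neg at hmin
  exact ⟨k, hmin, by simpa using hspec⟩




/-- Base integral 2 : `∫_ℂ l/((|z-c|+l)^2 |z-c|) ≤ 48`. -/
lemma base2 (c : ℂ) {l : ℝ} (hl : 0 < l) :
    ∫⁻ z, ENNReal.ofReal (l / ((Complex.abs (z - c) + l) ^ 2 * Complex.abs (z - c)))
      ≤ ENNReal.ofReal 48 := by
  set S : ℕ → Set ℂ := fun k =>
    {z | l * 2 ^ k ≤ Complex.abs (z - c) ∧ Complex.abs (z - c) < l * 2 ^ (k+1)} with hS
  have habs : Measurable fun z : ℂ => Complex.abs (z - c) :=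
    (Complex.continuous_abs.comp (continuous_id.sub continuous_const)).measurable
  have hSmeas : ∀ k, MeasurableSet (S k) :=
    fun k => (measurableSet_le measurable_const habs).inter (measurableSet_lt habs measurable_const)
  have hcover : (univ : Set ℂ) ⊆ ball c l ∪ ⋃ k, S k := by
    intro z _
    rcases lt_or_ge (Complex.abs (z - c)) l with h | h
    · exact Or.inl (by rwa [mem_ball, Complex.dist_eq])
    · obtain ⟨k, hk1, hk2⟩ := dyadic_up hl h
      exact Or.inr (mem_iUnion.2 ⟨k, hk1, hk2⟩)
  calc ∫⁻ z, ENNReal.ofReal (l / ((Complex.abs (z - c) + l) ^ 2 * Complex.abs (z - c)))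
      = ∫⁻ z in (univ : Set ℂ),
          ENNReal.ofReal (l / ((Complex.abs (z - c) + l) ^ 2 * Complex.abs (z - c))) := by
        rw [Measure.restrict_univ]
    _ ≤ (∫⁻ z in ball c l,
          ENNReal.ofReal (l / ((Complex.abs (z - c) + l) ^ 2 * Complex.abs (z - c))))
        + ∫⁻ z in (⋃ k, S k),
          ENNReal.ofReal (l / ((Complex.abs (z - c) + l) ^ 2 * Complex.abs (z - c))) :=
        le_trans (lintegral_mono' (Measure.restrict_mono hcover le_rfl) le_rfl)
          (lintegral_union_le _ _ _)
    _ ≤ ENNReal.ofReal 16 + ∑' k, ENNReal.ofReal 16 * (ENNReal.ofReal (1/2))^k := by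
        gcongr
        · -- ball part
          calc ∫⁻ z in ball c l,
              ENNReal.ofReal (l / ((Complex.abs (z - c) + l) ^ 2 * Complex.abs (z - c)))
              ≤ ∫⁻ z in ball c l, ENNReal.ofReal l⁻¹ * ENNReal.ofReal (1 / Complex.abs (z - c)) := by
                refine lintegral_mono fun z => ?_
                rw [← ENNReal.ofReal_mul (by positivity)]
                refine ENNReal.ofReal_le_ofReal ?_
                rcases eq_or_lt_of_le (Complex.abs.nonneg (z - c)) with h0 | h0
                · rw [← h0]; simp
                · have h2 : l⁻¹ * (1 / Complex.abs (z - c))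
                      = l / (l^2 * Complex.abs (z - c)) := by
                    field_simp
                  rw [h2]
                  refine div_le_div_of_nonneg_left hl.le (by positivity) ?_
                  nlinarith [sq_nonneg (Complex.abs (z - c))]
            _ = ENNReal.ofReal l⁻¹ * ∫⁻ z in ball c l, ENNReal.ofReal (1 / Complex.abs (z - c)) :=
                lintegral_const_mul' _ _ ENNReal.ofReal_ne_top
            _ ≤ ENNReal.ofReal l⁻¹ * ENNReal.ofReal (16 * l) :=
                mul_le_mul_right (base1 c l) _
            _ = ENNReal.ofReal 16 := by
                rw [← ENNReal.ofReal_mul (by positivity)]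
                congr 1
                field_simp
        · -- annuli
          refine le_trans (lintegral_iUnion_le _ _) ?_
          gcongr with k
          have hbound : ∀ z ∈ S k,
              (l / ((Complex.abs (z - c) + l) ^ 2 * Complex.abs (z - c)))
                ≤ 1 / (l^2 * 8^k) := by
            intro z hz
            obtain ⟨h1, _⟩ := hz
            have hq : (0:ℝ) < l * 2 ^ k := by positivity
            have ht : (0:ℝ) < Complex.abs (z - c) := lt_of_lt_of_le hq h1
            have h8 : (8:ℝ)^k = 2^k * 2^k * 2^k := by
              rw [show (8:ℝ) = 2*2*2 by norm_num, mul_pow, mul_pow]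
            rw [div_le_div_iff₀ (mul_pos (pow_pos (by linarith) 2) ht) (by positivity)]
            have e2 : (l * 2^k)^2 ≤ (Complex.abs (z - c) + l)^2 := by nlinarith
            calc l * (l^2 * 8^k) = (l*2^k)^2 * (l*2^k) := by rw [h8]; ring
              _ ≤ (Complex.abs (z - c) + l)^2 * Complex.abs (z - c) :=
                  mul_le_mul e2 h1 hq.le (sq_nonneg _)
              _ = 1 * ((Complex.abs (z - c) + l) ^ 2 * Complex.abs (z - c)) := by ring
          have hsub : S k ⊆ ball c (l * 2 ^ (k+1)) := fun z hz => by
            rw [mem_ball, Complex.dist_eq]; exact hz.2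
          calc ∫⁻ z in S k,
              ENNReal.ofReal (l / ((Complex.abs (z - c) + l) ^ 2 * Complex.abs (z - c)))
              ≤ ∫⁻ _ in S k, ENNReal.ofReal (1 / (l^2 * 8^k)) :=
                lintegral_mono_ae ((ae_restrict_mem (hSmeas k)).mono fun z hz =>
                  ENNReal.ofReal_le_ofReal (hbound z hz))
            _ = ENNReal.ofReal (1 / (l^2 * 8^k)) * volume (S k) := setLIntegral_const _ _
            _ ≤ ENNReal.ofReal (1 / (l^2 * 8^k)) * ENNReal.ofReal (4 * (l * 2 ^ (k+1)) ^ 2) :=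
                mul_le_mul_right ((measure_mono hsub).trans (vol_ball_le _ _)) _
            _ = ENNReal.ofReal (1 / (l^2 * 8^k) * (4 * (l * 2 ^ (k+1)) ^ 2)) :=
                (ENNReal.ofReal_mul (by positivity)).symm
            _ = ENNReal.ofReal (16 * (1/2)^k) := by
                congr 1
                have h8 : (8:ℝ)^k = 2^k * 2^k * 2^k := by
                  rw [show (8:ℝ) = 2*2*2 by norm_num, mul_pow, mul_pow]
                field_simp [h8]
                rw [one_div_pow, mul_one_div, eq_div_iff (by positivity), h8]; ring
            _ = ENNReal.ofReal 16 * (ENNReal.ofReal (1/2))^k := by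
                rw [ENNReal.ofReal_mul (by positivity), ENNReal.ofReal_pow (by norm_num)]
    _ ≤ ENNReal.ofReal 48 := by
        rw [ENNReal.tsum_mul_left, half_pow_tsum]
        rw [← ENNReal.ofReal_ofNat 2, ← ENNReal.ofReal_mul (by positivity)]
        norm_num



lemma abs_one_sub_conj_mul_ge (w z : ℂ) (hz : Complex.abs z ≤ 1) :
    1 - Complex.abs w ≤ Complex.abs (1 - (starRingEnd ℂ) w * z) := by
  have h := norm_sub_norm_le (1:ℂ) ((starRingEnd ℂ) w * z)
  simp only [Complex.norm_eq_abs, map_one, map_mul, Complex.abs_conj] at h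
  nlinarith [Complex.abs.nonneg w, Complex.abs.nonneg z,
    mul_le_of_le_one_right (Complex.abs.nonneg w) hz]

lemma pw2 (ζ z : ℂ) (hζ : Complex.abs ζ = 1) (hz : Complex.abs z ≤ 1) :
    1 - Complex.abs z ^ 2 ≤ 2 * Complex.abs (ζ - z) := by
  have h := norm_sub_norm_le ζ z
  simp only [Complex.norm_eq_abs, hζ] at h
  nlinarith [Complex.abs.nonneg z]

lemma abs_pos_sub_ne (ζ z : ℂ) (hζ : Complex.abs ζ = 1) (hz : Complex.abs z < 1) :
    0 < Complex.abs (ζ - z) := by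
  have : ζ ≠ z := fun h => by rw [h] at hζ; linarith
  simpa [sub_eq_zero] using Complex.abs.pos (sub_ne_zero.2 this)

lemma pw1 (w z : ℂ) (hw : 1/2 < Complex.abs w) (hw1 : Complex.abs w < 1)
    (hz : Complex.abs z ≤ 1) :
    (Complex.abs (z - ((Complex.abs w : ℂ))⁻¹ * w) + (1 - Complex.abs w)) / 6
      ≤ Complex.abs (1 - (starRingEnd ℂ) w * z) := by
  have hw0 : Complex.abs w ≠ 0 := by positivity
  set a : ℂ := ((Complex.abs w : ℂ))⁻¹ * w with ha
  set r : ℝ := Complex.abs (z - a) with hr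
  set l : ℝ := 1 - Complex.abs w with hl
  have hl0 : 0 < l := by simp only [hl]; linarith
  have hr0 : 0 ≤ r := Complex.abs.nonneg _
  have hca : (starRingEnd ℂ) w * a = (Complex.abs w : ℂ) := by
    have hne : ((Complex.abs w : ℝ) : ℂ) ≠ 0 := Complex.ofReal_ne_zero.2 hw0
    rw [ha, mul_left_comm, mul_comm ((starRingEnd ℂ) w) w, Complex.mul_conj]
    rw [show ((Complex.normSq w : ℝ) : ℂ) = ((Complex.abs w : ℂ) * (Complex.abs w : ℂ)) by
      rw [← Complex.ofReal_mul]; norm_cast; rw [← Complex.sq_abs]; ring]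
    rw [← mul_assoc, inv_mul_cancel₀ hne, one_mul]
  have key : Complex.abs w * r - l ≤ Complex.abs (1 - (starRingEnd ℂ) w * z) := by
    have h1 : Complex.abs ((starRingEnd ℂ) w * z - (Complex.abs w : ℂ))
        = Complex.abs w * r := by
      rw [← hca, ← mul_sub, map_mul, Complex.abs_conj]
    have h2 : Complex.abs ((starRingEnd ℂ) w * z - (Complex.abs w : ℂ))
        ≤ Complex.abs ((starRingEnd ℂ) w * z - 1) + Complex.abs (1 - (Complex.abs w : ℂ)) := by
      have := Complex.abs.add_le ((starRingEnd ℂ) w * z - 1) (1 - (Complex.abs w : ℂ))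
      simpa using this
    have h3 : Complex.abs ((starRingEnd ℂ) w * z - 1)
        = Complex.abs (1 - (starRingEnd ℂ) w * z) := by
      exact Complex.abs.map_sub _ _
    have h4 : Complex.abs (1 - (Complex.abs w : ℂ)) = l := by
      rw [show (1:ℂ) - (Complex.abs w : ℂ) = ((1 - Complex.abs w : ℝ) : ℂ) by push_cast; ring,
        Complex.abs_ofReal, abs_of_nonneg hl0.le]
    rw [h1, h3, h4] at h2
    linarith
  have hlower := abs_one_sub_conj_mul_ge w z hz
  rcases le_or_gt r (4 * l) with h | h
  · calc (r + l) / 6 ≤ (4*l + l)/6 := by linarith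
    _ ≤ l := by linarith
    _ ≤ _ := hlower
  · have h5 : r / 4 ≤ Complex.abs w * r - l := by nlinarith
    calc (r + l)/6 ≤ (r + r/4)/6 := by linarith
    _ ≤ r/4 := by linarith
    _ ≤ _ := le_trans h5 key

lemma pw0 (w ζ z : ℂ) (hw : Complex.abs w ≤ 1/2) (hζ : Complex.abs ζ = 1)
    (hz : Complex.abs z < 1) :
    (1 - Complex.abs w ^ 2) / Complex.abs (1 - (starRingEnd ℂ) w * z) ^ 2
      * ((1 - Complex.abs z ^ 2) / Complex.abs (ζ - z) ^ 2)
      ≤ 8 * (1 / Complex.abs (ζ - z)) := by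
  have hρ : 0 < Complex.abs (ζ - z) := abs_pos_sub_ne ζ z hζ hz
  have hden : (1:ℝ)/2 ≤ Complex.abs (1 - (starRingEnd ℂ) w * z) := by
    have h := norm_sub_norm_le (1:ℂ) ((starRingEnd ℂ) w * z)
    simp only [Complex.norm_eq_abs, map_one, map_mul, Complex.abs_conj] at h
    nlinarith [Complex.abs.nonneg w, Complex.abs.nonneg z,
      mul_le_of_le_one_right (Complex.abs.nonneg w) hz.le]
  have hnum : (1 - Complex.abs w ^ 2) * (1 - Complex.abs z ^ 2)
      ≤ 1 * (2 * Complex.abs (ζ - z)) := by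
    have h2 := pw2 ζ z hζ hz.le
    have h1z : 0 ≤ 1 - Complex.abs z ^ 2 := by nlinarith [Complex.abs.nonneg z]
    have hwle : 1 - Complex.abs w ^ 2 ≤ 1 := by nlinarith [sq_nonneg (Complex.abs w)]
    calc (1 - Complex.abs w ^ 2) * (1 - Complex.abs z ^ 2)
        ≤ 1 * (1 - Complex.abs z ^ 2) := mul_le_mul_of_nonneg_right hwle h1z
      _ ≤ 1 * (2 * Complex.abs (ζ - z)) := by rw [one_mul, one_mul]; exact h2
  rw [div_mul_div_comm]
  calc (1 - Complex.abs w ^ 2) * (1 - Complex.abs z ^ 2)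
        / (Complex.abs (1 - (starRingEnd ℂ) w * z) ^ 2 * Complex.abs (ζ - z) ^ 2)
      ≤ (2 * Complex.abs (ζ - z)) / ((1/2)^2 * Complex.abs (ζ - z) ^ 2) := by
        apply div_le_div₀ (by positivity) (by linarith) (by positivity)
        exact mul_le_mul_of_nonneg_right (pow_le_pow_left₀ (by norm_num) hden 2) (sq_nonneg _)
    _ = 8 * (1 / Complex.abs (ζ - z)) := by
        field_simp
        ring

lemma pw_master (w ζ z : ℂ) (hw : 1/2 < Complex.abs w) (hw1 : Complex.abs w < 1)
    (hζ : Complex.abs ζ = 1) (hz : Complex.abs z < 1) :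
    (1 - Complex.abs w ^ 2) / Complex.abs (1 - (starRingEnd ℂ) w * z) ^ 2
      * ((1 - Complex.abs z ^ 2) / Complex.abs (ζ - z) ^ 2)
      ≤ 144 * (1 - Complex.abs w)
        / ((Complex.abs (z - ((Complex.abs w : ℂ))⁻¹ * w) + (1 - Complex.abs w)) ^ 2
            * Complex.abs (ζ - z)) := by
  set a : ℂ := ((Complex.abs w : ℂ))⁻¹ * w with ha
  set r : ℝ := Complex.abs (z - a) with hr
  set l : ℝ := 1 - Complex.abs w with hl
  set ρ : ℝ := Complex.abs (ζ - z) with hρdef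
  have hl0 : 0 < l := by simp only [hl]; linarith
  have hr0 : 0 ≤ r := Complex.abs.nonneg _
  have hρ : 0 < ρ := abs_pos_sub_ne ζ z hζ hz
  have hden := pw1 w z hw hw1 hz.le
  rw [← ha, ← hr, ← hl] at hden
  have hnum : (1 - Complex.abs w ^ 2) * (1 - Complex.abs z ^ 2) ≤ (2*l) * (2*ρ) := by
    have h2 := pw2 ζ z hζ hz.le
    rw [← hρdef] at h2
    have hw2 : 1 - Complex.abs w ^ 2 ≤ 2 * l := by nlinarith
    have h1z : 0 ≤ 1 - Complex.abs z ^ 2 := by nlinarith [Complex.abs.nonneg z]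
    nlinarith
  rw [div_mul_div_comm]
  calc (1 - Complex.abs w ^ 2) * (1 - Complex.abs z ^ 2)
        / (Complex.abs (1 - (starRingEnd ℂ) w * z) ^ 2 * ρ ^ 2)
      ≤ ((2*l) * (2*ρ)) / (((r + l)/6) ^ 2 * ρ ^ 2) := by
        apply div_le_div₀ (by positivity) hnum (by positivity)
        exact mul_le_mul_of_nonneg_right (pow_le_pow_left₀ (by positivity) hden 2) (sq_nonneg _)
    _ = 144 * l / ((r + l) ^ 2 * ρ) := by
        field_simp
        ring

lemma pw4 (w ζ z : ℂ) (hw : 1/2 < Complex.abs w) (hw1 : Complex.abs w < 1)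
    (hζ : Complex.abs ζ = 1) (hz : Complex.abs z < 1)
    (hA : Complex.abs (z - ζ) < Complex.abs (ζ - ((Complex.abs w : ℂ))⁻¹ * w) / 2) :
    (1 - Complex.abs w ^ 2) / Complex.abs (1 - (starRingEnd ℂ) w * z) ^ 2
      * ((1 - Complex.abs z ^ 2) / Complex.abs (ζ - z) ^ 2)
      ≤ (72 / Complex.abs (ζ - ((Complex.abs w : ℂ))⁻¹ * w)) * (1 / Complex.abs (ζ - z)) := by
  set a : ℂ := ((Complex.abs w : ℂ))⁻¹ * w with ha
  set r : ℝ := Complex.abs (z - a) with hr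
  set l : ℝ := 1 - Complex.abs w with hl
  set ρ : ℝ := Complex.abs (ζ - z) with hρdef
  set e : ℝ := Complex.abs (ζ - a) with he
  have hl0 : 0 < l := by simp only [hl]; linarith
  have hρ : 0 < ρ := abs_pos_sub_ne ζ z hζ hz
  have hρζ : Complex.abs (z - ζ) = ρ := Complex.abs.map_sub _ _
  rw [hρζ] at hA
  have he0 : 0 < e := by
    have := Complex.abs.nonneg (z - ζ)
    rw [hρζ] at this
    linarith
  have htri : e ≤ ρ + r := by
    calc e = Complex.abs ((ζ - z) + (z - a)) := by rw [he]; ring_nf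
    _ ≤ ρ + r := Complex.abs.add_le _ _
  have hrge : e/2 ≤ r := by linarith
  have hkey : 2 * e * l ≤ (r + l)^2 := by
    have h1 : (e/2 + l)^2 ≤ (r + l)^2 := by nlinarith
    have h2 : 2*e*l ≤ (e/2 + l)^2 := by nlinarith [sq_nonneg (e/2 - l)]
    exact h2.trans h1
  refine le_trans (pw_master w ζ z hw hw1 hζ hz) ?_
  simp only [← ha, ← hr, ← hl, ← hρdef, ← he]
  calc 144 * l / ((r + l) ^ 2 * ρ) ≤ 144 * l / ((2 * e * l) * ρ) := by
        refine div_le_div_of_nonneg_left (by positivity) (by positivity) ?_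
        exact mul_le_mul_of_nonneg_right hkey hρ.le
    _ = (72 / e) * (1 / ρ) := by
        field_simp
        ring

lemma pw5 (w ζ z : ℂ) (hw : 1/2 < Complex.abs w) (hw1 : Complex.abs w < 1)
    (hζ : Complex.abs ζ = 1) (hz : Complex.abs z < 1)
    (hB : Complex.abs (ζ - ((Complex.abs w : ℂ))⁻¹ * w) / 2 ≤ Complex.abs (z - ζ)) :
    (1 - Complex.abs w ^ 2) / Complex.abs (1 - (starRingEnd ℂ) w * z) ^ 2
      * ((1 - Complex.abs z ^ 2) / Complex.abs (ζ - z) ^ 2)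
      ≤ 576 * ((1 - Complex.abs w)
          / ((Complex.abs (z - ((Complex.abs w : ℂ))⁻¹ * w) + (1 - Complex.abs w)) ^ 2
              * Complex.abs (z - ((Complex.abs w : ℂ))⁻¹ * w))) := by
  set a : ℂ := ((Complex.abs w : ℂ))⁻¹ * w with ha
  set r : ℝ := Complex.abs (z - a) with hr
  set l : ℝ := 1 - Complex.abs w with hl
  set ρ : ℝ := Complex.abs (ζ - z) with hρdef
  set e : ℝ := Complex.abs (ζ - a) with he
  have hl0 : 0 < l := by simp only [hl]; linarith
  have hρ : 0 < ρ := abs_pos_sub_ne ζ z hζ hz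
  have hρζ : Complex.abs (z - ζ) = ρ := Complex.abs.map_sub _ _
  rw [hρζ] at hB
  have he0 : 0 ≤ e := Complex.abs.nonneg _
  have habs1 : Complex.abs a = 1 := by
    have hw0 : Complex.abs w ≠ 0 := by positivity
    rw [ha, map_mul, map_inv₀, Complex.abs_ofReal, abs_of_nonneg (Complex.abs.nonneg w),
      inv_mul_cancel₀ hw0]
  have hrpos : 0 < r := by
    rw [hr, Complex.abs.map_sub]
    exact abs_pos_sub_ne a z habs1 hz
  have hr4 : r ≤ 4 * ρ := by
    rcases le_or_gt r (2*e) with hc | hc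
    · linarith
    · have : r ≤ ρ + e := by
        calc r = Complex.abs ((z - ζ) + (ζ - a)) := by rw [hr]; ring_nf
        _ ≤ Complex.abs (z - ζ) + e := Complex.abs.add_le _ _
        _ = ρ + e := by rw [hρζ]
      linarith
  refine le_trans (pw_master w ζ z hw hw1 hζ hz) ?_
  simp only [← ha, ← hr, ← hl, ← hρdef]
  rw [mul_div_assoc']
  rw [div_le_div_iff₀ (mul_pos (pow_pos (by linarith) 2) hρ)
    (mul_pos (pow_pos (by linarith) 2) hrpos)]
  have hfac : (0:ℝ) ≤ 144 * l * (r + l)^2 := by positivity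
  nlinarith [mul_le_mul_of_nonneg_left hr4 hfac]




lemma hD_meas : MeasurableSet {z : ℂ | Complex.abs z < 1} :=
  measurableSet_lt Complex.continuous_abs.measurable measurable_const

lemma hK_nonneg (w z : ℂ) (hw : Complex.abs w < 1) :
    0 ≤ (1 - Complex.abs w ^ 2) / Complex.abs (1 - (starRingEnd ℂ) w * z) ^ 2 :=
  div_nonneg (by nlinarith [Complex.abs.nonneg w]) (by positivity)

lemma inner_bound (w ζ : ℂ) (hw : Complex.abs w < 1) (hζ : Complex.abs ζ = 1) :
    ∫⁻ z in {z : ℂ | Complex.abs z < 1},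
        ENNReal.ofReal
          ((1 - Complex.abs w ^ 2) / Complex.abs (1 - (starRingEnd ℂ) w * z) ^ 2)
        * ENNReal.ofReal ((1 - Complex.abs z ^ 2) / Complex.abs (ζ - z) ^ 2)
      ≤ ENNReal.ofReal 30000 := by
  set D : Set ℂ := {z : ℂ | Complex.abs z < 1} with hDdef
  rcases le_or_gt (Complex.abs w) (1/2) with hsmall | hbig
  · -- small w
    calc ∫⁻ z in D, ENNReal.ofReal
            ((1 - Complex.abs w ^ 2) / Complex.abs (1 - (starRingEnd ℂ) w * z) ^ 2)
          * ENNReal.ofReal ((1 - Complex.abs z ^ 2) / Complex.abs (ζ - z) ^ 2)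
        ≤ ∫⁻ z in D, ENNReal.ofReal 8 * ENNReal.ofReal (1 / Complex.abs (ζ - z)) := by
          refine lintegral_mono_ae ((ae_restrict_mem hD_meas).mono fun z hz => ?_)
          rw [← ENNReal.ofReal_mul (hK_nonneg w z hw), ← ENNReal.ofReal_mul (by norm_num)]
          exact ENNReal.ofReal_le_ofReal (pw0 w ζ z hsmall hζ hz)
      _ ≤ ∫⁻ z in ball ζ 2, ENNReal.ofReal 8 * ENNReal.ofReal (1 / Complex.abs (ζ - z)) := by
          refine lintegral_mono' (Measure.restrict_mono (fun z hz => ?_) le_rfl) le_rfl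
          have h1 : Complex.abs (z - ζ) ≤ Complex.abs z + Complex.abs ζ := by
            have := Complex.abs.add_le z (-ζ)
            simpa [sub_eq_add_neg] using this
          rw [mem_ball, Complex.dist_eq, Complex.norm_eq_abs]
          have hz1 : Complex.abs z < 1 := hz
          rw [hζ] at h1
          linarith
      _ = ENNReal.ofReal 8 * ∫⁻ z in ball ζ 2, ENNReal.ofReal (1 / Complex.abs (z - ζ)) := by
          rw [lintegral_const_mul' _ _ ENNReal.ofReal_ne_top]
          congr 1
          exact lintegral_congr fun z => by rw [Complex.abs.map_sub]
      _ ≤ ENNReal.ofReal 8 * ENNReal.ofReal (16 * 2) := mul_le_mul_right (base1 ζ 2) _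
      _ ≤ ENNReal.ofReal 30000 := by
          rw [← ENNReal.ofReal_mul (by norm_num)]
          exact ENNReal.ofReal_le_ofReal (by norm_num)
  · -- big w
    set a : ℂ := ((Complex.abs w : ℂ))⁻¹ * w with ha
    set e : ℝ := Complex.abs (ζ - a) with he
    set l : ℝ := 1 - Complex.abs w with hl
    have hl0 : 0 < l := by simp only [hl]; linarith
    have he0 : 0 ≤ e := Complex.abs.nonneg _
    have hsplit : ∫⁻ z in D, ENNReal.ofReal
            ((1 - Complex.abs w ^ 2) / Complex.abs (1 - (starRingEnd ℂ) w * z) ^ 2)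
          * ENNReal.ofReal ((1 - Complex.abs z ^ 2) / Complex.abs (ζ - z) ^ 2)
        ≤ (∫⁻ z in D ∩ ball ζ (e/2), ENNReal.ofReal
            ((1 - Complex.abs w ^ 2) / Complex.abs (1 - (starRingEnd ℂ) w * z) ^ 2)
          * ENNReal.ofReal ((1 - Complex.abs z ^ 2) / Complex.abs (ζ - z) ^ 2))
          + ∫⁻ z in D \ ball ζ (e/2), ENNReal.ofReal
            ((1 - Complex.abs w ^ 2) / Complex.abs (1 - (starRingEnd ℂ) w * z) ^ 2)
          * ENNReal.ofReal ((1 - Complex.abs z ^ 2) / Complex.abs (ζ - z) ^ 2) := by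
      exact le_trans (lintegral_mono' (Measure.restrict_mono
        (Set.inter_union_diff D (ball ζ (e/2))).symm.subset le_rfl) le_rfl)
        (lintegral_union_le _ _ _)
    refine hsplit.trans ?_
    have partA : ∫⁻ z in D ∩ ball ζ (e/2), ENNReal.ofReal
            ((1 - Complex.abs w ^ 2) / Complex.abs (1 - (starRingEnd ℂ) w * z) ^ 2)
          * ENNReal.ofReal ((1 - Complex.abs z ^ 2) / Complex.abs (ζ - z) ^ 2)
        ≤ ENNReal.ofReal 576 := by
      rcases eq_or_lt_of_le he0 with he0' | he0'
      · have : ball ζ (e/2) = ∅ := by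
          rw [← he0']
          norm_num
        rw [this, Set.inter_empty]
        simp
      calc ∫⁻ z in D ∩ ball ζ (e/2), ENNReal.ofReal
              ((1 - Complex.abs w ^ 2) / Complex.abs (1 - (starRingEnd ℂ) w * z) ^ 2)
            * ENNReal.ofReal ((1 - Complex.abs z ^ 2) / Complex.abs (ζ - z) ^ 2)
          ≤ ∫⁻ z in D ∩ ball ζ (e/2),
              ENNReal.ofReal (72 / e) * ENNReal.ofReal (1 / Complex.abs (ζ - z)) := by
            refine lintegral_mono_ae
              ((ae_restrict_mem (hD_meas.inter measurableSet_ball)).mono fun z hz => ?_)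
            rw [← ENNReal.ofReal_mul (hK_nonneg w z hw), ← ENNReal.ofReal_mul (by positivity)]
            refine ENNReal.ofReal_le_ofReal (pw4 w ζ z hbig hw hζ hz.1 ?_)
            have h2 := hz.2
            rw [mem_ball, Complex.dist_eq] at h2
            exact h2
        _ ≤ ∫⁻ z in ball ζ (e/2),
              ENNReal.ofReal (72 / e) * ENNReal.ofReal (1 / Complex.abs (ζ - z)) :=
            lintegral_mono' (Measure.restrict_mono Set.inter_subset_right le_rfl) le_rfl
        _ = ENNReal.ofReal (72 / e)
            * ∫⁻ z in ball ζ (e/2), ENNReal.ofReal (1 / Complex.abs (z - ζ)) := by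
            rw [lintegral_const_mul' _ _ ENNReal.ofReal_ne_top]
            congr 1
            exact lintegral_congr fun z => by rw [Complex.abs.map_sub]
        _ ≤ ENNReal.ofReal (72 / e) * ENNReal.ofReal (16 * (e/2)) :=
            mul_le_mul_right (base1 ζ (e/2)) _
        _ = ENNReal.ofReal 576 := by
            rw [← ENNReal.ofReal_mul (by positivity)]
            congr 1
            field_simp
            ring
    have partB : ∫⁻ z in D \ ball ζ (e/2), ENNReal.ofReal
            ((1 - Complex.abs w ^ 2) / Complex.abs (1 - (starRingEnd ℂ) w * z) ^ 2)
          * ENNReal.ofReal ((1 - Complex.abs z ^ 2) / Complex.abs (ζ - z) ^ 2)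
        ≤ ENNReal.ofReal 27648 := by
      calc ∫⁻ z in D \ ball ζ (e/2), ENNReal.ofReal
              ((1 - Complex.abs w ^ 2) / Complex.abs (1 - (starRingEnd ℂ) w * z) ^ 2)
            * ENNReal.ofReal ((1 - Complex.abs z ^ 2) / Complex.abs (ζ - z) ^ 2)
          ≤ ∫⁻ z in D \ ball ζ (e/2), ENNReal.ofReal 576 * ENNReal.ofReal
              (l / ((Complex.abs (z - a) + l) ^ 2 * Complex.abs (z - a))) := by
            refine lintegral_mono_ae
              ((ae_restrict_mem (hD_meas.diff measurableSet_ball)).mono fun z hz => ?_)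
            rw [← ENNReal.ofReal_mul (hK_nonneg w z hw), ← ENNReal.ofReal_mul (by norm_num)]
            refine ENNReal.ofReal_le_ofReal (pw5 w ζ z hbig hw hζ hz.1 ?_)
            have h2 := hz.2
            rw [mem_ball, Complex.dist_eq, not_lt] at h2
            exact h2
        _ ≤ ∫⁻ z, ENNReal.ofReal 576 * ENNReal.ofReal
              (l / ((Complex.abs (z - a) + l) ^ 2 * Complex.abs (z - a))) := by
            exact setLIntegral_le_lintegral _ _
        _ = ENNReal.ofReal 576 * ∫⁻ z, ENNReal.ofReal
              (l / ((Complex.abs (z - a) + l) ^ 2 * Complex.abs (z - a))) :=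
            lintegral_const_mul' _ _ ENNReal.ofReal_ne_top
        _ ≤ ENNReal.ofReal 576 * ENNReal.ofReal 48 := mul_le_mul_right (base2 a hl0) _
        _ = ENNReal.ofReal 27648 := by
            rw [← ENNReal.ofReal_mul (by norm_num)]
            norm_num
    calc _ ≤ ENNReal.ofReal 576 + ENNReal.ofReal 27648 := add_le_add partA partB
      _ ≤ ENNReal.ofReal 30000 := by
          rw [← ENNReal.ofReal_add (by norm_num) (by norm_num)]
          exact ENNReal.ofReal_le_ofReal (by norm_num)



/-- The Poisson extension of a measure `μ` (carried on the unit circle) to the unit disc. -/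
noncomputable def PoissonExt (μ : Measure ℂ) (z : ℂ) : ℝ :=
  ∫ ζ, (1 - ‖z‖ ^ 2) / ‖ζ - z‖ ^ 2 ∂μ

theorem poisson_carleson :
    ∃ C : ℝ, 0 < C ∧ ∀ (μ : Measure ℂ), IsFiniteMeasure μ →
      (∀ᵐ ζ ∂μ, ‖ζ‖ = 1) →
      ∀ w : ℂ, ‖w‖ < 1 →
        (∫ z in {z : ℂ | ‖z‖ < 1},
            (1 - ‖w‖ ^ 2) / ‖1 - (starRingEnd ℂ) w * z‖ ^ 2
              * PoissonExt μ z)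
          ≤ C * (μ Set.univ).toReal := by
  refine ⟨30000, by norm_num, ?_⟩
  intro μ hfin hae w hw
  haveI := hfin
  -- measurable pieces
  have hmK : Measurable fun z : ℂ =>
      (1 - ‖w‖ ^ 2) / ‖1 - (starRingEnd ℂ) w * z‖ ^ 2 :=
    measurable_const.div ((Complex.continuous_abs.measurable.comp
      (measurable_const.sub (measurable_const.mul measurable_id))).pow_const 2)
  have hmg : Measurable fun q : ℂ × ℂ =>
      (1 - ‖q.1‖ ^ 2) / ‖q.2 - q.1‖ ^ 2 :=
    (measurable_const.sub ((Complex.continuous_abs.measurable.comp measurable_fst).pow_const 2)).div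
      ((Complex.continuous_abs.measurable.comp (measurable_snd.sub measurable_fst)).pow_const 2)
  have hmP : Measurable (PoissonExt μ) := by
    have h : StronglyMeasurable fun z : ℂ =>
        ∫ ζ, (1 - ‖z‖ ^ 2) / ‖ζ - z‖ ^ 2 ∂μ :=
      (hmg.stronglyMeasurable).integral_prod_right'
    exact h.measurable
  have h0 : 0 ≤ᵐ[volume.restrict {z : ℂ | ‖z‖ < 1}] fun z =>
      (1 - ‖w‖ ^ 2) / ‖1 - (starRingEnd ℂ) w * z‖ ^ 2
        * PoissonExt μ z :=
    (ae_restrict_mem hD_meas).mono fun z hz => mul_nonneg (hK_nonneg w z hw)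
      (integral_nonneg fun ζ' => div_nonneg
        (by nlinarith [norm_nonneg z, show ‖z‖ < 1 from hz]) (by positivity))
  rw [integral_eq_lintegral_of_nonneg_ae h0 (hmK.mul hmP).aestronglyMeasurable]
  have key : ∫⁻ z in {z : ℂ | ‖z‖ < 1},
      ENNReal.ofReal
        ((1 - ‖w‖ ^ 2) / ‖1 - (starRingEnd ℂ) w * z‖ ^ 2
          * PoissonExt μ z)
      ≤ ENNReal.ofReal 30000 * μ univ := by
    calc ∫⁻ z in {z : ℂ | ‖z‖ < 1},
        ENNReal.ofReal
          ((1 - ‖w‖ ^ 2) / ‖1 - (starRingEnd ℂ) w * z‖ ^ 2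
            * PoissonExt μ z)
        = ∫⁻ z in {z : ℂ | ‖z‖ < 1},
            ENNReal.ofReal
              ((1 - ‖w‖ ^ 2) / ‖1 - (starRingEnd ℂ) w * z‖ ^ 2)
            * ENNReal.ofReal (PoissonExt μ z) :=
          lintegral_congr fun z => ENNReal.ofReal_mul (hK_nonneg w z hw)
      _ ≤ ∫⁻ z in {z : ℂ | ‖z‖ < 1},
            ENNReal.ofReal
              ((1 - ‖w‖ ^ 2) / ‖1 - (starRingEnd ℂ) w * z‖ ^ 2)
            * ∫⁻ ζ', ENNReal.ofReal ((1 - ‖z‖ ^ 2) / ‖ζ' - z‖ ^ 2) ∂μ := by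
          refine lintegral_mono_ae ((ae_restrict_mem hD_meas).mono fun z hz => ?_)
          refine mul_le_mul_right ?_ _
          by_cases hint :
            Integrable (fun ζ' => (1 - ‖z‖ ^ 2) / ‖ζ' - z‖ ^ 2) μ
          · rw [PoissonExt, ofReal_integral_eq_lintegral_ofReal hint
              (ae_of_all _ fun ζ' => div_nonneg
                (by nlinarith [norm_nonneg z, show ‖z‖ < 1 from hz])
                (by positivity))]
          · rw [PoissonExt, integral_undef hint]
            simp
      _ = ∫⁻ z in {z : ℂ | ‖z‖ < 1}, ∫⁻ ζ',
            ENNReal.ofReal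
              ((1 - ‖w‖ ^ 2) / ‖1 - (starRingEnd ℂ) w * z‖ ^ 2)
            * ENNReal.ofReal ((1 - ‖z‖ ^ 2) / ‖ζ' - z‖ ^ 2) ∂μ :=
          lintegral_congr fun z => (lintegral_const_mul' _ _ ENNReal.ofReal_ne_top).symm
      _ = ∫⁻ ζ', (∫⁻ z in {z : ℂ | ‖z‖ < 1},
            ENNReal.ofReal
              ((1 - ‖w‖ ^ 2) / ‖1 - (starRingEnd ℂ) w * z‖ ^ 2)
            * ENNReal.ofReal ((1 - ‖z‖ ^ 2) / ‖ζ' - z‖ ^ 2)) ∂μ := by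
          refine lintegral_lintegral_swap ?_
          exact (((hmK.comp measurable_fst).ennreal_ofReal).mul
            (hmg.ennreal_ofReal)).aemeasurable
      _ ≤ ∫⁻ _, ENNReal.ofReal 30000 ∂μ :=
          lintegral_mono_ae (hae.mono fun ζ' hζ' => inner_bound w ζ' hw hζ')
      _ = ENNReal.ofReal 30000 * μ univ := lintegral_const _
  have hfin' : ENNReal.ofReal 30000 * μ univ ≠ ⊤ :=
    ENNReal.mul_ne_top ENNReal.ofReal_ne_top (measure_ne_top μ _)
  calc (∫⁻ z in {z : ℂ | ‖z‖ < 1},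
        ENNReal.ofReal
          ((1 - ‖w‖ ^ 2) / ‖1 - (starRingEnd ℂ) w * z‖ ^ 2
            * PoissonExt μ z)).toReal
      ≤ (ENNReal.ofReal 30000 * μ univ).toReal := ENNReal.toReal_mono hfin' key
    _ = 30000 * (μ univ).toReal := by
        rw [ENNReal.toReal_mul, ENNReal.toReal_ofReal (by norm_num)]
end

section
/- Let T be a bounded m-isometry on a complex Hilbert space H with a unit vector e ∈ ker T*, and suppose there is c > 0 with ‖Tx‖ ≥ c‖x‖ for all x ∈ H. Then for every analytic polynomial f(z) = ∑_{k=0}^{N} a_k z^k, ‖f(T)e‖² ≥ ∑_{k=0}^{N} c^{2k} |a_k|², where f(T) = ∑_k a_k T^k. -/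
open ContinuousLinearMap

variable {H : Type*} [NormedAddCommGroup H] [InnerProductSpace ℂ H] [CompleteSpace H]

lemma aux_lower_bound (T : H →L[ℂ] H)
    (e : H) (he : ‖e‖ = 1) (hker : (ContinuousLinearMap.adjoint T) e = 0)
    (c : ℝ) (hc : 0 < c) (hlb : ∀ x : H, c * ‖x‖ ≤ ‖T x‖) :
    ∀ (N : ℕ) (a : ℕ → ℂ),
      ∑ k ∈ Finset.range (N + 1), c ^ (2 * k) * ‖a k‖ ^ 2
        ≤ ‖∑ k ∈ Finset.range (N + 1), a k • (T ^ k) e‖ ^ 2 := by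
  intro N
  induction N with
  | zero =>
    intro a
    simp [Finset.sum_range_one, norm_smul, he]
  | succ N ih =>
    intro a
    set w : H := ∑ k ∈ Finset.range (N + 1), a (k + 1) • (T ^ k) e with hw
    have hvec : ∑ k ∈ Finset.range (N + 1 + 1), a k • (T ^ k) e = T w + a 0 • e := by
      rw [Finset.sum_range_succ']
      congr 1
      · rw [hw, map_sum]
        refine Finset.sum_congr rfl fun k _ => ?_
        rw [map_smul]
        congr 1
        rw [pow_succ', ContinuousLinearMap.mul_apply]
    have horth : (inner ℂ (T w) (a 0 • e) : ℂ) = 0 := by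
      rw [inner_smul_right, ← ContinuousLinearMap.adjoint_inner_right, hker,
        inner_zero_right, mul_zero]
    have hpyth : ‖T w + a 0 • e‖ ^ 2 = ‖T w‖ ^ 2 + ‖a 0 • e‖ ^ 2 := by
      rw [norm_add_sq (𝕜 := ℂ), horth]
      simp
    have hTw : c ^ 2 * ‖w‖ ^ 2 ≤ ‖T w‖ ^ 2 := by
      have := hlb w
      calc c ^ 2 * ‖w‖ ^ 2 = (c * ‖w‖) ^ 2 := by ring
        _ ≤ ‖T w‖ ^ 2 := by
            apply pow_le_pow_left₀ (by positivity) this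
    have hsum : ∑ k ∈ Finset.range (N + 1 + 1), c ^ (2 * k) * ‖a k‖ ^ 2
        = c ^ 2 * (∑ k ∈ Finset.range (N + 1), c ^ (2 * k) * ‖a (k + 1)‖ ^ 2)
          + ‖a 0‖ ^ 2 := by
      rw [Finset.sum_range_succ', Finset.mul_sum]
      congr 1
      · refine Finset.sum_congr rfl fun k _ => ?_
        rw [show 2 * (k + 1) = 2 * k + 2 by ring, pow_add]
        ring
      · simp
    rw [hvec, hpyth, hsum]
    have h1 : c ^ 2 * (∑ k ∈ Finset.range (N + 1), c ^ (2 * k) * ‖a (k + 1)‖ ^ 2)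
        ≤ ‖T w‖ ^ 2 := by
      calc c ^ 2 * (∑ k ∈ Finset.range (N + 1), c ^ (2 * k) * ‖a (k + 1)‖ ^ 2)
          ≤ c ^ 2 * ‖w‖ ^ 2 := by
            apply mul_le_mul_of_nonneg_left (ih fun k => a (k + 1)) (by positivity)
        _ ≤ ‖T w‖ ^ 2 := hTw
    have h2 : ‖a 0‖ ^ 2 ≤ ‖a 0 • e‖ ^ 2 := by
      simp [norm_smul, he]
    exact add_le_add h1 h2

theorem lower_bound_functional_calculus (T : H →L[ℂ] H) (m : ℕ) (hT : beta T m = 0)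
    (e : H) (he : ‖e‖ = 1) (hker : (ContinuousLinearMap.adjoint T) e = 0)
    (c : ℝ) (hc : 0 < c) (hlb : ∀ x : H, c * ‖x‖ ≤ ‖T x‖)
    (N : ℕ) (a : ℕ → ℂ) :
    ∑ k ∈ Finset.range (N + 1), c ^ (2 * k) * ‖a k‖ ^ 2
      ≤ ‖∑ k ∈ Finset.range (N + 1), a k • (T ^ k) e‖ ^ 2 :=
  aux_lower_bound T e he hker c hc hlb N a
end
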